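/- arXiv:1202.5484 — 9 statements merged into one kernel-verified Lean document; each statement's English description precedes it below -/
import Mathlib

section
/- Let G = ℤ^r for some r ∈ ℕ, let S ⊆ G be a symmetric finite generating set, and let s ∈ S \ {0} be an element of S of maximal Euclidean (ℓ²) norm. Then for every h ∈ G the algebraic line n ↦ h + n·s of type s is a convex geodesic line in Cay(G,S). -/
/-- The Cayley graph of an (additive) group `G` with respect to a subset `S`:
vertices are elements of `G`, and `g`, `h` are adjacent iff `h - g ∈ (S ∪ -S) \ {0}`. -/
def cayley {G : Type*} [AddCommGroup G] (S : Set G) : SimpleGraph G where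
  Adj g h := g ≠ h ∧ (h - g ∈ S ∨ g - h ∈ S)
  symm := ⟨fun _ _ hadj => ⟨hadj.1.symm, hadj.2.symm⟩⟩
  loopless := ⟨fun _ hadj => hadj.1 rfl⟩

/-- `p 0, p 1, …, p n` is a geodesic segment in `Γ`: a path whose length realizes
the distance between its endpoints. -/
def IsGeodesicSegment {V : Type*} (Γ : SimpleGraph V) (n : ℕ) (p : ℕ → V) : Prop :=
  (∀ i < n, Γ.Adj (p i) (p (i + 1))) ∧ Γ.dist (p 0) (p n) = n

/-- A geodesic line in `Γ`. -/
def IsGeodesicLine {V : Type*} (Γ : SimpleGraph V) (γ : ℤ → V) : Prop :=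
  ∀ j k : ℤ, Γ.dist (γ j) (γ k) = (j - k).natAbs

/-- A convex geodesic line: a geodesic line such that for all `n ≤ m` the only geodesic
segment from `γ n` to `γ m` is `(γ n, γ (n+1), …, γ m)`. -/
def IsConvexGeodesicLine {V : Type*} (Γ : SimpleGraph V) (γ : ℤ → V) : Prop :=
  IsGeodesicLine Γ γ ∧
    ∀ n m : ℤ, n ≤ m → ∀ (k : ℕ) (p : ℕ → V),
      IsGeodesicSegment Γ k p → p 0 = γ n → p k = γ m →
        ∀ j ≤ k, p j = γ (n + j)

/-- A quasi-convex geodesic line: a geodesic line such that geodesic segments joining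
points `c`-close to the line stay uniformly `C`-close to it (fellow-traveller style). -/
def IsQuasiConvexGeodesicLine {V : Type*} (Γ : SimpleGraph V) (γ : ℤ → V) : Prop :=
  IsGeodesicLine Γ γ ∧
    ∀ c : ℕ, ∃ C : ℕ, ∀ n m : ℤ, n ≤ m → ∀ x y : V,
      Γ.dist x (γ n) ≤ c → Γ.dist y (γ m) ≤ c →
        ∀ p : ℕ → V, IsGeodesicSegment Γ (Γ.dist x y) p →
          p 0 = x → p (Γ.dist x y) = y →
            ∀ j ≤ Γ.dist x y, Γ.dist (p j) (γ (n + j)) ≤ C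

/-- A quasi-algebraic line of quasi-type `t ∈ G/tors G` in `Cay(G,S)`: a ℤ-path in the
Cayley graph all of whose steps project to `t` in `G/tors G`. -/
def IsQuasiAlgebraicLine {G : Type*} [AddCommGroup G] (S : Set G)
    (t : G ⧸ AddCommGroup.torsion G) (γ : ℤ → G) : Prop :=
  (∀ n : ℤ, (cayley S).Adj (γ n) (γ (n + 1))) ∧
    ∀ n : ℤ, QuotientAddGroup.mk' (AddCommGroup.torsion G) (γ (n + 1) - γ n) = t

section aux
variable {r : ℕ} {S : Set (Fin r → ℤ)} {s : Fin r → ℤ}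

/-- The linear functional `x ↦ ⟨x, s⟩`. -/
def phiS (s : Fin r → ℤ) : (Fin r → ℤ) →+ ℤ where
  toFun x := ∑ i, x i * s i
  map_zero' := by simp
  map_add' x y := by simp [add_mul, Finset.sum_add_distrib]

lemma phiS_apply (x : Fin r → ℤ) : phiS s x = ∑ i, x i * s i := rfl

lemma phiS_self : phiS s s = ∑ i, (s i) ^ 2 := by
  simp [phiS_apply, sq]

lemma sum_sub_sq (t : Fin r → ℤ) :
    ∑ i, (t i - s i) ^ 2 = ∑ i, (t i) ^ 2 + ∑ i, (s i) ^ 2 - 2 * phiS s t := by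
  rw [phiS_apply, Finset.mul_sum, ← Finset.sum_add_distrib, ← Finset.sum_sub_distrib]
  exact Finset.sum_congr rfl fun i _ => by ring

lemma phiS_le (hmax : ∀ t ∈ S, ∑ i, (t i) ^ 2 ≤ ∑ i, (s i) ^ 2)
    {t : Fin r → ℤ} (ht : t ∈ S) : phiS s t ≤ ∑ i, (s i) ^ 2 := by
  have h0 : (0:ℤ) ≤ ∑ i, (t i - s i) ^ 2 :=
    Finset.sum_nonneg fun i _ => sq_nonneg _
  have := sum_sub_sq (s := s) t
  have := hmax t ht
  linarith

lemma phiS_eq (hmax : ∀ t ∈ S, ∑ i, (t i) ^ 2 ≤ ∑ i, (s i) ^ 2)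
    {t : Fin r → ℤ} (ht : t ∈ S) (heq : phiS s t = ∑ i, (s i) ^ 2) : t = s := by
  have h1 := sum_sub_sq (s := s) t
  have h2 := hmax t ht
  have h3 : ∑ i, (t i - s i) ^ 2 ≤ 0 := by rw [h1, heq]; linarith
  have h4 : ∑ i, (t i - s i) ^ 2 = 0 :=
    le_antisymm h3 (Finset.sum_nonneg fun i _ => sq_nonneg _)
  funext i
  have := (Finset.sum_eq_zero_iff_of_nonneg fun i _ => sq_nonneg (t i - s i)).1 h4
    i (Finset.mem_univ i)
  have := sq_eq_zero_iff.1 this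
  linarith [this]

lemma step_mem (hsym : ∀ t ∈ S, -t ∈ S) {a b : Fin r → ℤ}
    (hab : (cayley S).Adj a b) : b - a ∈ S := by
  rcases hab.2 with h | h
  · exact h
  · simpa using hsym _ h

lemma walk_bound (hsym : ∀ t ∈ S, -t ∈ S)
    (hmax : ∀ t ∈ S, ∑ i, (t i) ^ 2 ≤ ∑ i, (s i) ^ 2)
    {a b : Fin r → ℤ} (w : (cayley S).Walk a b) :
    phiS s (b - a) ≤ (w.length : ℤ) * ∑ i, (s i) ^ 2 := by
  induction w with
  | nil => simp
  | @cons a c b hadj w ih =>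
    have h1 : phiS s (b - a) = phiS s (c - a) + phiS s (b - c) := by
      rw [← map_add]; ring_nf
    have h2 := phiS_le hmax (step_mem hsym hadj)
    rw [SimpleGraph.Walk.length_cons, h1]
    push_cast
    linarith

lemma exists_walk (hs : s ∈ S) (hs0 : s ≠ 0) (a : Fin r → ℤ) (m : ℕ) :
    ∃ w : (cayley S).Walk a (a + (m : ℤ) • s), w.length = m := by
  induction m with
  | zero => exact ⟨SimpleGraph.Walk.nil.copy rfl (by simp), by simp⟩
  | succ m ih =>
    obtain ⟨w, hw⟩ := ih
    have hadj : (cayley S).Adj (a + (m : ℤ) • s) (a + ((m : ℕ) + 1 : ℤ) • s) := by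
      constructor
      · intro hcon
        apply hs0
        have h1 : a + (m : ℤ) • s + s = a + ((m : ℕ) + 1 : ℤ) • s := by
          rw [add_smul, one_smul, ← add_assoc]
        exact left_eq_add.mp (hcon.trans h1.symm)
      · left
        have : a + ((m : ℕ) + 1 : ℤ) • s - (a + (m : ℤ) • s) = s := by
          rw [add_smul, one_smul]; abel
        rw [this]; exact hs
    refine ⟨(w.concat hadj).copy rfl (by push_cast; ring_nf), ?_⟩
    simp [SimpleGraph.Walk.length_concat, hw]

lemma sum_sq_pos (hs0 : s ≠ 0) : (0:ℤ) < ∑ i, (s i) ^ 2 := by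
  obtain ⟨i, hi⟩ := Function.ne_iff.1 hs0
  exact Finset.sum_pos' (fun j _ => sq_nonneg _)
    ⟨i, Finset.mem_univ i, pow_two_pos_of_ne_zero hi⟩

lemma dist_add_smul (hsym : ∀ t ∈ S, -t ∈ S) (hs : s ∈ S) (hs0 : s ≠ 0)
    (hmax : ∀ t ∈ S, ∑ i, (t i) ^ 2 ≤ ∑ i, (s i) ^ 2)
    (a : Fin r → ℤ) (m : ℕ) : (cayley S).dist a (a + (m : ℤ) • s) = m := by
  obtain ⟨w, hw⟩ := exists_walk hs hs0 a m
  refine le_antisymm ((SimpleGraph.dist_le w).trans hw.le) ?_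
  obtain ⟨w', hw'⟩ := w.reachable.exists_walk_length_eq_dist
  have hb := walk_bound hsym hmax w'
  have hQ := sum_sq_pos hs0
  have hphi : phiS s (a + (m : ℤ) • s - a) = (m : ℤ) * ∑ i, (s i) ^ 2 := by
    rw [add_sub_cancel_left, map_zsmul, phiS_self, smul_eq_mul]
  rw [hphi, hw'] at hb
  exact_mod_cast le_of_mul_le_mul_right hb hQ

end aux

/-- In `ℤ^r` with a symmetric finite generating set `S`, if `s ∈ S \ {0}` has maximal
Euclidean (ℓ²) norm among elements of `S`, then for every `h` the algebraic line
`n ↦ h + n • s` of type `s` is a convex geodesic line in `Cay(ℤ^r, S)`. -/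
theorem algebraic_line_convex {r : ℕ} (S : Set (Fin r → ℤ)) (hfin : S.Finite)
    (hsym : ∀ t ∈ S, -t ∈ S) (hgen : AddSubgroup.closure S = ⊤)
    (s : Fin r → ℤ) (hs : s ∈ S) (hs0 : s ≠ 0)
    (hmax : ∀ t ∈ S, ∑ i, (t i) ^ 2 ≤ ∑ i, (s i) ^ 2)
    (h : Fin r → ℤ) :
    IsConvexGeodesicLine (cayley S) (fun n : ℤ => h + n • s) := by
  have key : ∀ j k : ℤ, k ≤ j →
      (cayley S).dist (h + k • s) (h + j • s) = (j - k).natAbs := by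
    intro j k hkj
    have h1 : h + j • s = (h + k • s) + (((j - k).natAbs : ℤ)) • s := by
      rw [Int.natAbs_of_nonneg (by omega), sub_smul]; abel
    rw [h1, dist_add_smul hsym hs hs0 hmax]
  have hline : IsGeodesicLine (cayley S) (fun n : ℤ => h + n • s) := by
    intro j k
    simp only []
    rcases le_total k j with hc | hc
    · rw [SimpleGraph.dist_comm, key j k hc]
    · rw [key k j hc]; omega
  refine ⟨hline, ?_⟩
  intro n m hnm k p hseg hp0 hpk j hjk
  obtain ⟨hadj, hdist⟩ := hseg
  have hkval : (k : ℤ) = m - n := by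
    have := hline n m
    rw [← hp0, ← hpk, hdist] at this
    omega
  have hmem : ∀ i < k, p (i + 1) - p i ∈ S := fun i hi => step_mem hsym (hadj i hi)
  set Q : ℤ := ∑ i, (s i) ^ 2 with hQdef
  have hsum : ∑ i ∈ Finset.range k, phiS s (p (i + 1) - p i) = (k : ℤ) * Q := by
    rw [← map_sum, Finset.sum_range_sub, hpk, hp0]
    have he : (h + m • s) - (h + n • s) = (m - n) • s := by rw [sub_smul]; abel
    rw [he, map_zsmul, phiS_self, smul_eq_mul, hkval]
  have hle : ∀ i ∈ Finset.range k, phiS s (p (i + 1) - p i) ≤ Q :=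
    fun i hi => phiS_le hmax (hmem i (Finset.mem_range.mp hi))
  have hstep : ∀ i < k, p (i + 1) - p i = s := by
    intro i hi
    apply phiS_eq hmax (hmem i hi)
    by_contra hne
    have hlt : phiS s (p (i + 1) - p i) < Q :=
      lt_of_le_of_ne (hle i (Finset.mem_range.mpr hi)) hne
    have hsl := Finset.sum_lt_sum hle ⟨i, Finset.mem_range.mpr hi, hlt⟩
    rw [hsum, Finset.sum_const, Finset.card_range, nsmul_eq_mul] at hsl
    exact lt_irrefl _ hsl
  clear hle hsum hmem hdist hadj
  induction j with
  | zero => simpa using hp0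
  | succ j ih =>
    have hj' : j ≤ k := by omega
    have hjk' : j < k := by omega
    have hpj : p j = h + (n + (j : ℤ)) • s := ih hj'
    have hnext : p (j + 1) = p j + s := by
      have := hstep j hjk'
      rw [← this]; abel
    rw [hnext, hpj]
    simp only []
    push_cast
    have he2 : (n + ((j : ℤ) + 1)) • s = (n + (j : ℤ)) • s + s := by
      rw [show n + ((j : ℤ) + 1) = (n + (j : ℤ)) + 1 by ring, add_smul, one_smul]
    rw [he2, add_assoc]
end

section
/- Let G be an Abelian group and let S ⊆ G be a finite symmetric generating set. Then every convex geodesic line in Cay(G,S) is algebraic, i.e., of the form n ↦ h + n·s for some h ∈ G and s ∈ S. -/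
/-- If `G` is an Abelian group and `S ⊆ G` is a finite symmetric generating set, then
every convex geodesic line in `Cay(G,S)` is algebraic, i.e. of the form
`n ↦ h + n • s` for some `h ∈ G` and `s ∈ S`. -/
theorem convex_geodesic_line_algebraic {G : Type*} [AddCommGroup G] (S : Set G)
    (hfin : S.Finite) (hsym : ∀ s ∈ S, -s ∈ S) (hgen : AddSubgroup.closure S = ⊤)
    (γ : ℤ → G) (hγ : IsConvexGeodesicLine (cayley S) γ) :
    ∃ s ∈ S, ∃ h : G, ∀ n : ℤ, γ n = h + n • s := by
  obtain ⟨hgeo, hconv⟩ := hγ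
  have hadj : ∀ n : ℤ, (cayley S).Adj (γ n) (γ (n + 1)) := by
    intro n
    have h1 : (cayley S).dist (γ n) (γ (n + 1)) = 1 := by
      rw [hgeo]; simp
    exact (SimpleGraph.dist_eq_one_iff_adj).mp h1
  have hsucc : ∀ n : ℤ, γ (n + 2) - γ (n + 1) = γ (n + 1) - γ n := by
    intro n
    have hadj1 := hadj (n + 1)
    rw [show n + 1 + 1 = n + 2 by ring] at hadj1
    set d : G := γ (n + 2) - γ (n + 1) with hd
    let p : ℕ → G := fun j => if j = 0 then γ n else if j = 1 then γ n + d else γ (n + 2)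
    have hseg : IsGeodesicSegment (cayley S) 2 p := by
      constructor
      · intro i hi
        interval_cases i
        · show (cayley S).Adj (γ n) (γ n + d)
          refine ⟨?_, ?_⟩
          · intro h
            rw [left_eq_add] at h
            exact hadj1.1 (sub_eq_zero.mp h).symm
          · have e1 : γ n + d - γ n = γ (n + 2) - γ (n + 1) := by rw [hd]; abel
            have e2 : γ n - (γ n + d) = γ (n + 1) - γ (n + 2) := by rw [hd]; abel
            rw [e1, e2]
            exact hadj1.2
        · show (cayley S).Adj (γ n + d) (γ (n + 2))
          refine ⟨?_, ?_⟩
          · intro h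
            apply (hadj n).1
            have : γ n + (γ (n + 2) - γ (n + 1)) = γ (n + 2) := by rw [← hd]; exact h
            have h2 : γ n - γ (n + 1) = 0 := by
              have := sub_eq_zero.mpr this
              rw [← this]; abel
            exact (sub_eq_zero.mp h2)
          · have e1 : γ (n + 2) - (γ n + d) = γ (n + 1) - γ n := by rw [hd]; abel
            have e2 : γ n + d - γ (n + 2) = γ n - γ (n + 1) := by rw [hd]; abel
            rw [e1, e2]
            exact (hadj n).2
      · show (cayley S).dist (p 0) (p 2) = 2
        have h0 : p 0 = γ n := rfl
        have h2 : p 2 = γ (n + 2) := rfl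
        rw [h0, h2, hgeo]
        simp
    have key := hconv n (n + 2) (by linarith) 2 p hseg rfl rfl 1 (by norm_num)
    have hp1 : p 1 = γ n + d := rfl
    rw [hp1] at key
    norm_num at key
    -- key : γ n + d = γ (n + 1)
    rw [hd] at key ⊢
    have key2 : (γ (n + 2) - γ (n + 1)) + γ n = γ (n + 1) := by
      rw [add_comm]; exact key
    exact eq_sub_of_add_eq key2
  have hstep : ∀ n : ℤ, γ (n + 1) - γ n = γ 1 - γ 0 := by
    intro n
    induction n using Int.induction_on with
    | zero => norm_num
    | succ k ih =>
        have h := hsucc k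
        rw [show (k : ℤ) + 2 = k + 1 + 1 by ring] at h
        rw [h]; exact ih
    | pred k ih =>
        have h := hsucc (-(k : ℤ) - 1)
        rw [show -(k : ℤ) - 1 + 2 = -k + 1 by ring,
            show -(k : ℤ) - 1 + 1 = -k by ring] at h
        rw [show -(k : ℤ) - 1 + 1 = -(k : ℤ) by ring, ← h]
        exact ih
  have hsS : γ 1 - γ 0 ∈ S := by
    rcases (hadj 0).2 with h | h
    · simpa using h
    · have := hsym _ h
      simpa using this
  refine ⟨γ 1 - γ 0, hsS, γ 0, ?_⟩
  intro n
  induction n using Int.induction_on with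
  | zero => simp
  | succ k ih =>
      have h := hstep (k : ℤ)
      have h2 : γ ((k : ℤ) + 1) = γ k + (γ 1 - γ 0) := by rw [← h]; abel
      rw [h2, ih, add_smul, one_smul]; abel
  | pred k ih =>
      have h := hstep (-(k : ℤ) - 1)
      rw [show -(k : ℤ) - 1 + 1 = -(k : ℤ) by ring] at h
      have h2 : γ (-(k : ℤ) - 1) = γ (-(k : ℤ)) - (γ 1 - γ 0) := by rw [← h]; abel
      rw [h2, ih, sub_smul, one_smul]; abel
end

section
/- Let G be a finitely generated Abelian group, let S ⊆ G be a symmetric finite generating set, and equip G/tors G with the ℓ²-norm ‖·‖₂ induced by a chosen isomorphism G/tors G ≅ ℤ^{rk G}. Let s ∈ S \ tors G be an element maximizing ‖π_G(·)‖₂ among elements of S. Then every quasi-algebraic line of quasi-type π_G(s) in Cay(G,S) is a quasi-convex geodesic line. -/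
namespace QACLAux

open SimpleGraph Finset

variable {G : Type*} [AddCommGroup G] {S : Set G}

lemma cayley_adj {g h : G} :
    (cayley S).Adj g h ↔ g ≠ h ∧ (h - g ∈ S ∨ g - h ∈ S) := Iff.rfl

lemma adj_translate (a : G) {g h : G} (had : (cayley S).Adj g h) :
    (cayley S).Adj (g + a) (h + a) :=
  cayley_adj.mpr ⟨fun he => (cayley_adj.mp had).1 (add_right_cancel he), by
    simpa [add_sub_add_right_eq_sub] using (cayley_adj.mp had).2⟩

def transHom (a : G) : cayley S →g cayley S :=
  ⟨fun g => g + a, fun had => adj_translate a had⟩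

lemma reachable_translate (a : G) {x y : G} (h : (cayley S).Reachable x y) :
    (cayley S).Reachable (x + a) (y + a) :=
  h.map (transHom a)

lemma dist_translate (a x y : G) :
    (cayley S).dist (x + a) (y + a) = (cayley S).dist x y := by
  have key : ∀ (b : G) (u v : G),
      (cayley S).dist (u + b) (v + b) ≤ (cayley S).dist u v := by
    intro b u v
    by_cases hr : (cayley S).Reachable u v
    · obtain ⟨w, hw⟩ := hr.exists_walk_length_eq_dist
      calc (cayley S).dist (u + b) (v + b) ≤ (w.map (transHom b)).length :=
            SimpleGraph.dist_le _
        _ = w.length := SimpleGraph.Walk.length_map _ _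
        _ = _ := hw
    · rw [SimpleGraph.dist_eq_zero_of_not_reachable hr,
        SimpleGraph.dist_eq_zero_of_not_reachable]
      intro hr2
      exact hr (by simpa using reachable_translate (-b) hr2)
  refine le_antisymm (key a x y) ?_
  have := key (-a) (x + a) (y + a)
  simpa using this

lemma dist_eq_zero_sub (x y : G) :
    (cayley S).dist x y = (cayley S).dist 0 (y - x) := by
  have := dist_translate (S := S) (-x) x y
  simp only [add_neg_cancel] at this
  rw [← this]
  congr 1
  abel

lemma connected (hgen : AddSubgroup.closure S = ⊤) : (cayley S).Connected := by
  have h0 : ∀ g : G, (cayley S).Reachable 0 g := by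
    intro g
    have hg : g ∈ AddSubgroup.closure S := by rw [hgen]; trivial
    refine AddSubgroup.closure_induction (fun x hx => ?_) ?_
      (fun x y _ _ ihx ihy => ?_) (fun x _ ihx => ?_) hg
    · by_cases hx0 : x = 0
      · subst hx0; exact Reachable.refl 0
      · exact SimpleGraph.Adj.reachable (cayley_adj.mpr ⟨fun h => hx0 h.symm, Or.inl (by simpa using hx)⟩)
    · exact Reachable.refl 0
    · have h2 := reachable_translate (S := S) x ihy
      rw [zero_add, add_comm y x] at h2
      exact ihx.trans h2
    · have h2 := reachable_translate (S := S) (-x) ihx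
      rw [zero_add, add_neg_cancel] at h2
      exact h2.symm
  haveI : Nonempty G := ⟨0⟩
  refine ⟨fun x y => ?_⟩
  have := reachable_translate (S := S) x (h0 (y - x))
  rw [zero_add, sub_add_cancel] at this
  exact this

lemma dist_zero_add_le (hconn : (cayley S).Connected) (a b : G) :
    (cayley S).dist 0 (a + b) ≤ (cayley S).dist 0 a + (cayley S).dist 0 b := by
  have h1 := hconn.dist_triangle (u := (0 : G)) (v := a) (w := a + b)
  have h2 : (cayley S).dist a (a + b) = (cayley S).dist 0 b := by
    have := dist_translate (S := S) a 0 b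
    rw [zero_add, add_comm b a] at this
    exact this
  omega

lemma dist_zero_single {t : G} (ht : t ∈ S ∨ -t ∈ S) : (cayley S).dist 0 t ≤ 1 := by
  by_cases h0 : t = 0
  · simp [h0, SimpleGraph.dist_self]
  · have hadj : (cayley S).Adj 0 t := by
      refine cayley_adj.mpr ⟨fun h => h0 h.symm, ?_⟩
      rcases ht with h | h
      · exact Or.inl (by simpa using h)
      · exact Or.inr (by simpa using h)
    calc (cayley S).dist 0 t ≤ hadj.toWalk.length := SimpleGraph.dist_le _
      _ = 1 := by simp

lemma dist_zero_nsmul (hconn : (cayley S).Connected) {t : G} (ht : t ∈ S ∨ -t ∈ S)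
    (k : ℕ) : (cayley S).dist 0 (k • t) ≤ k := by
  induction k with
  | zero => simp
  | succ k ih =>
      rw [succ_nsmul]
      calc (cayley S).dist 0 (k • t + t)
          ≤ (cayley S).dist 0 (k • t) + (cayley S).dist 0 t := dist_zero_add_le hconn _ _
        _ ≤ k + 1 := add_le_add ih (dist_zero_single ht)

lemma dist_zero_sum (hconn : (cayley S).Connected) {ι : Type*} (F : Finset ι) (f : ι → G)
    (hf : ∀ i ∈ F, (cayley S).dist 0 (f i) ≤ 1) :
    (cayley S).dist 0 (∑ i ∈ F, f i) ≤ F.card := by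
  classical
  induction F using Finset.induction_on with
  | empty => simp
  | insert a s hx ih =>
      rw [Finset.sum_insert hx, Finset.card_insert_of_notMem hx]
      calc (cayley S).dist 0 (f a + ∑ i ∈ s, f i)
          ≤ (cayley S).dist 0 (f a) + (cayley S).dist 0 (∑ i ∈ s, f i) :=
            dist_zero_add_le hconn _ _
        _ ≤ 1 + s.card := add_le_add (hf a (Finset.mem_insert_self a s))
            (ih fun i hi => hf i (Finset.mem_insert_of_mem hi))
        _ = s.card + 1 := by omega

end QACLAux

open SimpleGraph Finset QACLAux in
set_option maxHeartbeats 1000000 in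
/-- Let `G` be a finitely generated Abelian group with symmetric finite generating set
`S`, and equip `G/tors G` with the ℓ²-norm induced by a chosen isomorphism
`e : G/tors G ≃ ℤ^d`. If `s ∈ S \ tors G` maximizes `‖π_G(·)‖₂` among elements of `S`,
then every quasi-algebraic line of quasi-type `π_G s` in `Cay(G,S)` is a quasi-convex
geodesic line. -/
theorem quasiAlgebraic_line_quasiConvex {G : Type*} [AddCommGroup G] [AddGroup.FG G]
    (S : Set G) (hfin : S.Finite) (hsym : ∀ t ∈ S, -t ∈ S)
    (hgen : AddSubgroup.closure S = ⊤)
    (d : ℕ) (e : (G ⧸ AddCommGroup.torsion G) ≃+ (Fin d → ℤ))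
    (s : G) (hs : s ∈ S) (hstor : s ∉ AddCommGroup.torsion G)
    (hmax : ∀ t ∈ S,
      ∑ i, (e (QuotientAddGroup.mk' (AddCommGroup.torsion G) t) i) ^ 2 ≤
        ∑ i, (e (QuotientAddGroup.mk' (AddCommGroup.torsion G) s) i) ^ 2)
    (γ : ℤ → G)
    (hγ : IsQuasiAlgebraicLine S (QuotientAddGroup.mk' (AddCommGroup.torsion G) s) γ) :
    IsQuasiConvexGeodesicLine (cayley S) γ := by
  classical
  set pr := QuotientAddGroup.mk' (AddCommGroup.torsion G) with hpr
  set V : Fin d → ℤ := e (pr s) with hV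
  set N : ℤ := ∑ i, V i ^ 2 with hN
  set φ : G → ℤ := fun g => ∑ i, e (pr g) i * V i with hφ
  have hconn : (cayley S).Connected := connected hgen
  have φ_sub : ∀ g h : G, φ (g - h) = φ g - φ h := by
    intro g h
    simp only [hφ, map_sub, Pi.sub_apply, sub_mul, Finset.sum_sub_distrib]
  -- the key per-generator bound
  have key : ∀ t : G, (t ∈ S ∨ -t ∈ S) →
      (φ t ≤ N ∧ -N ≤ φ t ∧ (φ t = N → pr t = pr s)) := by
    intro t ht
    set a : Fin d → ℤ := e (pr t) with ha
    have hφt : φ t = ∑ i, a i * V i := by simp only [hφ, ha]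
    have hsum : ∑ i, a i ^ 2 ≤ N := by
      rcases ht with h | h
      · exact hmax t h
      · have h2 := hmax (-t) h
        have hneg : e (pr (-t)) = -a := by rw [ha, map_neg, map_neg]
        calc ∑ i, a i ^ 2 = ∑ i, (e (pr (-t)) i) ^ 2 := by
              rw [hneg]; exact Finset.sum_congr rfl fun i _ => by simp [neg_sq]
          _ ≤ N := h2
    have e1 : (0:ℤ) ≤ ∑ i, (a i - V i) ^ 2 := Finset.sum_nonneg fun i _ => sq_nonneg _
    have e2 : ∑ i, (a i - V i) ^ 2 = (∑ i, a i ^ 2) - 2 * φ t + N := by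
      rw [hφt, hN, Finset.mul_sum, ← Finset.sum_sub_distrib, ← Finset.sum_add_distrib]
      exact Finset.sum_congr rfl fun i _ => by ring
    have e3 : (0:ℤ) ≤ ∑ i, (a i + V i) ^ 2 := Finset.sum_nonneg fun i _ => sq_nonneg _
    have e4 : ∑ i, (a i + V i) ^ 2 = (∑ i, a i ^ 2) + 2 * φ t + N := by
      rw [hφt, hN, Finset.mul_sum, ← Finset.sum_add_distrib, ← Finset.sum_add_distrib]
      exact Finset.sum_congr rfl fun i _ => by ring
    refine ⟨by linarith, by linarith, ?_⟩
    intro heq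
    have e5 : ∑ i, (a i - V i) ^ 2 = 0 := le_antisymm (by linarith) e1
    have e6 := (Finset.sum_eq_zero_iff_of_nonneg (fun i _ => sq_nonneg (a i - V i))).mp e5
    have e7 : a = V := by
      funext i
      have := e6 i (Finset.mem_univ i)
      have := pow_eq_zero_iff (n := 2) (by norm_num) |>.mp this
      linarith [sub_eq_zero.mp this]
    exact e.injective (by rw [← ha, ← hV]; exact e7)
  -- walks move φ by at most N per step
  have walkφ : ∀ (u v : G) (w : (cayley S).Walk u v), |φ v - φ u| ≤ N * w.length := by
    intro u v w
    induction w with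
    | nil => simp
    | cons hadj w ih =>
        rename_i u u' v'
        have hst : (u' - u) ∈ S ∨ -(u' - u) ∈ S := by
          rcases (cayley_adj.mp hadj).2 with h | h
          · exact Or.inl h
          · exact Or.inr (by simpa [neg_sub] using h)
        have hk := key _ hst
        rw [φ_sub] at hk
        have h1 : |φ u' - φ u| ≤ N := abs_le.mpr ⟨hk.2.1, hk.1⟩
        have habs := abs_sub_le (φ v') (φ u') (φ u)
        rw [SimpleGraph.Walk.length_cons]
        push_cast
        linarith
  have distφ : ∀ u v : G, |φ v - φ u| ≤ N * (cayley S).dist u v := by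
    intro u v
    obtain ⟨w, hw⟩ := (hconn u v).exists_walk_length_eq_dist
    rw [← hw]
    exact walkφ u v w
  -- N is positive
  have hN0 : 0 < N := by
    have hnn : 0 ≤ N := Finset.sum_nonneg fun i _ => sq_nonneg _
    rcases hnn.lt_or_eq with h | h
    · exact h
    · exfalso
      have hz := (Finset.sum_eq_zero_iff_of_nonneg (fun i _ => sq_nonneg (V i))).mp h.symm
      have hV0 : V = 0 := by
        funext i
        have := pow_eq_zero_iff (n := 2) (by norm_num) |>.mp (hz i (Finset.mem_univ i))
        simpa using this
      have : pr s = 0 := by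
        apply e.injective
        rw [← hV, hV0, map_zero]
      exact hstor ((QuotientAddGroup.eq_zero_iff s).mp (by rw [← QuotientAddGroup.mk'_apply]; exact this))
  -- φ along γ
  have hγstep : ∀ n : ℤ, φ (γ (n + 1)) - φ (γ n) = N := by
    intro n
    have h := hγ.2 n
    rw [← φ_sub]
    calc φ (γ (n + 1) - γ n) = ∑ i, V i * V i := by
          simp only [hφ]; rw [h, ← hV]
      _ = N := by rw [hN]; exact Finset.sum_congr rfl fun i _ => (sq (V i)).symm
  have hγφ : ∀ n : ℤ, φ (γ n) = φ (γ 0) + n * N := by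
    intro n
    induction n using Int.induction_on with
    | zero => simp
    | succ k ih =>
        have h := hγstep k
        push_cast at ih ⊢
        linarith
    | pred k ih =>
        have h := hγstep (-(k : ℤ) - 1)
        rw [show (-(k:ℤ) - 1 + 1) = -k by ring] at h
        push_cast at ih ⊢
        linarith
  have hγdist_le : ∀ (n : ℤ) (k : ℕ), (cayley S).dist (γ n) (γ (n + k)) ≤ k := by
    intro n k
    induction k with
    | zero => simp [SimpleGraph.dist_self]
    | succ k ih =>
        have hadj := hγ.1 (n + k)
        have hstep : (cayley S).dist (γ (n + k)) (γ (n + k + 1)) ≤ 1 := by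
          calc (cayley S).dist (γ (n + k)) (γ (n + k + 1)) ≤ hadj.toWalk.length :=
                SimpleGraph.dist_le _
            _ = 1 := by simp
        have htri := hconn.dist_triangle (u := γ n) (v := γ (n + k)) (w := γ (n + k + 1))
        have harg : (n + ((k : ℕ) + 1 : ℕ) : ℤ) = n + k + 1 := by push_cast; ring
        rw [harg]
        omega
  have hgeo : IsGeodesicLine (cayley S) γ := by
    have main : ∀ j k : ℤ, k ≤ j → (cayley S).dist (γ k) (γ j) = (j - k).natAbs := by
      intro j k hkj
      set t : ℕ := (j - k).toNat with htdef
      have ht : (t : ℤ) = j - k := Int.toNat_of_nonneg (by omega)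
      have hupper : (cayley S).dist (γ k) (γ j) ≤ t := by
        have := hγdist_le k t
        rw [ht] at this
        rw [show k + (j - k) = j by ring] at this
        exact this
      have hlower : (j - k : ℤ) ≤ (cayley S).dist (γ k) (γ j) := by
        have h1 := distφ (γ k) (γ j)
        have h2 : φ (γ j) - φ (γ k) = (j - k) * N := by
          rw [hγφ j, hγφ k]; ring
        rw [h2] at h1
        have h3 : |(j - k) * N| = (j - k) * N := abs_of_nonneg (mul_nonneg (by omega) hN0.le)
        rw [h3] at h1
        nlinarith [h1, hN0]
      omega
    intro j k
    rcases le_total k j with h | h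
    · rw [SimpleGraph.dist_comm, main j k h]
    · rw [main k j h]
      omega
  -- finiteness of the torsion subgroup
  haveI hModFin : Module.Finite ℤ G := Module.Finite.iff_addGroup_fg.mpr ‹AddGroup.FG G›
  have htorsfg : (AddSubgroup.toIntSubmodule (AddCommGroup.torsion G)).FG :=
    IsNoetherian.noetherian _
  haveI hMF2 : Module.Finite ℤ (AddSubgroup.toIntSubmodule (AddCommGroup.torsion G)) :=
    Module.Finite.iff_fg.mpr htorsfg
  haveI hFGtors : AddGroup.FG (AddCommGroup.torsion G) :=
    Module.Finite.iff_addGroup_fg.mp hMF2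
  haveI hFinite : Finite (AddCommGroup.torsion G) := by
    refine AddCommGroup.finite_of_fg_torsion _ ?_
    intro x
    have hx : IsOfFinAddOrder (x : G) := x.2
    obtain ⟨nn, hpos, hz⟩ := (isOfFinAddOrder_iff_nsmul_eq_zero).mp hx
    refine (isOfFinAddOrder_iff_nsmul_eq_zero).mpr ⟨nn, hpos, ?_⟩
    ext
    simpa using hz
  have hMex : ∃ M : ℕ, ∀ τ ∈ AddCommGroup.torsion G, (cayley S).dist 0 τ ≤ M := by
    have hfin2 : ((AddCommGroup.torsion G : Set G)).Finite := Set.toFinite _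
    have himg : (((cayley S).dist 0) '' (AddCommGroup.torsion G : Set G)).Finite :=
      hfin2.image _
    obtain ⟨M, hMub⟩ := himg.bddAbove
    exact ⟨M, fun τ hτ => hMub ⟨τ, hτ, rfl⟩⟩
  obtain ⟨M, hM⟩ := hMex
  set Nn : ℕ := N.toNat with hNn
  have hNnN : (Nn : ℤ) = N := Int.toNat_of_nonneg hN0.le
  refine ⟨hgeo, ?_⟩
  intro c
  refine ⟨M + c + (4 * c * Nn + 4 * c * Nn), ?_⟩
  intro n m hnm x y hx hy p hp hp0 hpd j hjle
  set dxy := (cayley S).dist x y with hdxy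
  set Good : ℕ → Prop := fun i => pr (p (i + 1) - p i) = pr s with hGoodDef
  have hstepS : ∀ i < dxy, (p (i + 1) - p i) ∈ S ∨ -(p (i + 1) - p i) ∈ S := by
    intro i hi
    rcases (cayley_adj.mp (hp.1 i hi)).2 with h | h
    · exact Or.inl h
    · exact Or.inr (by simpa [neg_sub] using h)
  have hφgood : ∀ i, Good i → φ (p (i + 1) - p i) = N := by
    intro i hgi
    calc φ (p (i + 1) - p i) = ∑ ii, V ii * V ii := by
          simp only [hφ]; rw [hgi, ← hV]
      _ = N := by rw [hN]; exact Finset.sum_congr rfl fun ii _ => (sq (V ii)).symm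
  have hφbad : ∀ i < dxy, ¬ Good i → φ (p (i + 1) - p i) ≤ N - 1 := by
    intro i hi hbi
    have hk := key _ (hstepS i hi)
    have hne : φ (p (i + 1) - p i) ≠ N := fun h => hbi (hk.2.2 h)
    have := hk.1
    omega
  -- sum bound with bad-step count
  have hsumb : ∀ k, k ≤ dxy → φ (p k) - φ (p 0) ≤
      (k : ℤ) * N - ((Finset.range k).filter (fun i => ¬ Good i)).card := by
    intro k
    induction k with
    | zero => intro _; simp
    | succ k ih =>
        intro hk
        have ihh := ih (Nat.le_of_succ_le hk)
        have hstepφ : φ (p (k + 1)) - φ (p k) = φ (p (k + 1) - p k) := (φ_sub _ _).symm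
        by_cases hg : Good k
        · have h1 := hφgood k hg
          have hcard : ((Finset.range (k+1)).filter (fun i => ¬ Good i)).card =
              ((Finset.range k).filter (fun i => ¬ Good i)).card := by
            rw [Finset.range_add_one, Finset.filter_insert, if_neg (not_not_intro hg)]
          rw [hcard]
          push_cast
          linarith
        · have h1 := hφbad k (by omega) hg
          have hcard : ((Finset.range (k+1)).filter (fun i => ¬ Good i)).card =
              ((Finset.range k).filter (fun i => ¬ Good i)).card + 1 := by
            rw [Finset.range_add_one, Finset.filter_insert, if_pos hg,
              Finset.card_insert_of_notMem (by simp)]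
          rw [hcard]
          push_cast
          linarith
  set b : ℕ → ℕ := fun k => ((Finset.range k).filter (fun i => ¬ Good i)).card with hb
  -- bound on total number of bad steps
  have hbadbound : b dxy ≤ 4 * c * Nn := by
    have h5 : φ y - φ x ≤ (dxy : ℤ) * N - b dxy := by
      have := hsumb dxy le_rfl
      rw [hp0, hpd] at this
      exact this
    have hx' : (cayley S).dist (γ n) x ≤ c := by rwa [SimpleGraph.dist_comm]
    have hy' : (cayley S).dist (γ m) y ≤ c := by rwa [SimpleGraph.dist_comm]
    have hA1 : |φ x - φ (γ n)| ≤ N * c :=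
      (distφ (γ n) x).trans (mul_le_mul_of_nonneg_left (by exact_mod_cast hx') hN0.le)
    have hA2 : |φ y - φ (γ m)| ≤ N * c :=
      (distφ (γ m) y).trans (mul_le_mul_of_nonneg_left (by exact_mod_cast hy') hN0.le)
    have hA3 : φ (γ m) - φ (γ n) = (m - n) * N := by
      rw [hγφ m, hγφ n]; ring
    have hA4 : (dxy : ℤ) ≤ (m - n) + 2 * c := by
      have h6 := hconn.dist_triangle (u := x) (v := γ n) (w := y)
      have h7 := hconn.dist_triangle (u := γ n) (v := γ m) (w := y)
      have h8 : (cayley S).dist (γ n) (γ m) = (n - m).natAbs := hgeo n m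
      omega
    have l1 := abs_le.mp hA1
    have l2 := abs_le.mp hA2
    have hd_mul : (dxy : ℤ) * N ≤ ((m - n) + 2 * c) * N :=
      mul_le_mul_of_nonneg_right hA4 hN0.le
    have hfinal : (b dxy : ℤ) ≤ 4 * c * N := by nlinarith
    rw [← hNnN] at hfinal
    exact_mod_cast hfinal
  have hbj : b j ≤ 4 * c * Nn :=
    le_trans (Finset.card_le_card (Finset.filter_subset_filter _
      (Finset.range_subset_range.mpr hjle))) hbadbound
  -- torsion decompositions
  have hmemtors : ∀ u v : G, pr u = pr v → u - v ∈ AddCommGroup.torsion G := by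
    intro u v huv
    rw [hpr, QuotientAddGroup.mk'_apply, QuotientAddGroup.mk'_apply] at huv
    exact (QuotientAddGroup.eq_iff_sub_mem).mp huv
  set g_j : ℕ := ((Finset.range j).filter (fun i => Good i)).card with hg_j
  set Bsum : G := ∑ i ∈ (Finset.range j).filter (fun i => ¬ Good i), (p (i + 1) - p i)
    with hBsum
  have hT1 : p j - p 0 - Bsum - g_j • s ∈ AddCommGroup.torsion G := by
    have htel : ∑ i ∈ Finset.range j, (p (i + 1) - p i) = p j - p 0 :=
      Finset.sum_range_sub (fun i => p i) j
    have hsplit := Finset.sum_filter_add_sum_filter_not (Finset.range j)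
      (fun i => Good i) (fun i => p (i + 1) - p i)
    have hrw : p j - p 0 - Bsum - g_j • s =
        ∑ i ∈ (Finset.range j).filter (fun i => Good i), ((p (i + 1) - p i) - s) := by
      rw [Finset.sum_sub_distrib, Finset.sum_const, ← hg_j, ← htel, ← hsplit, ← hBsum]
      abel
    rw [hrw]
    exact AddSubgroup.sum_mem _ fun i hi =>
      hmemtors _ _ ((Finset.mem_filter.mp hi).2)
  have hT2 : ∀ k : ℕ, γ (n + k) - γ n - k • s ∈ AddCommGroup.torsion G := by
    intro k
    induction k with
    | zero => simpa using (AddCommGroup.torsion G).zero_mem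
    | succ k ih =>
        have hstep := hγ.2 (n + k)
        have hmem : γ (n + k + 1) - γ (n + k) - s ∈ AddCommGroup.torsion G :=
          hmemtors _ _ hstep
        have harg : (n + ((k : ℕ) + 1 : ℕ) : ℤ) = n + k + 1 := by push_cast; ring
        have hexp : γ (n + ((k : ℕ) + 1 : ℕ)) - γ n - (k + 1) • s =
            (γ (n + k + 1) - γ (n + k) - s) + (γ (n + k) - γ n - k • s) := by
          rw [harg, succ_nsmul]
          abel
        rw [hexp]
        exact AddSubgroup.add_mem _ hmem ih
  -- assembling the distance bound
  have hgb : g_j + b j = j := by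
    rw [hg_j, hb]
    rw [Finset.card_filter_add_card_filter_not]
    exact Finset.card_range j
  set τ1 : G := p j - p 0 - Bsum - g_j • s with hτ1
  set τ2 : G := γ (n + j) - γ n - j • s with hτ2
  have hkey2 : γ (n + (j : ℕ)) - p j = (τ2 - τ1) + (γ n - p 0) + (- Bsum) + b j • s := by
    have hsmul : (j : ℕ) • s = g_j • s + b j • s := by rw [← add_nsmul, hgb]
    rw [hτ1, hτ2, hsmul]
    abel
  have hd1 : (cayley S).dist 0 (τ2 - τ1) ≤ M :=
    hM _ (AddSubgroup.sub_mem _ (hT2 j) hT1)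
  have hd2 : (cayley S).dist 0 (γ n - p 0) ≤ c := by
    rw [← dist_eq_zero_sub, hp0]
    exact hx
  have hd3 : (cayley S).dist 0 (- Bsum) ≤ b j := by
    rw [hBsum, ← Finset.sum_neg_distrib]
    have := dist_zero_sum hconn ((Finset.range j).filter (fun i => ¬ Good i))
      (fun i => -(p (i + 1) - p i)) ?_
    · exact this
    · intro i hi
      have hij : i < j := Finset.mem_range.mp (Finset.mem_filter.mp hi).1
      have hiS := hstepS i (lt_of_lt_of_le hij hjle)
      refine dist_zero_single ?_
      rcases hiS with h | h
      · exact Or.inr (by simpa using h)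
      · exact Or.inl h
  have hd4 : (cayley S).dist 0 (b j • s) ≤ b j :=
    dist_zero_nsmul hconn (Or.inl hs) (b j)
  have hfinal : (cayley S).dist (p j) (γ (n + (j : ℕ))) ≤ M + c + b j + b j := by
    rw [dist_eq_zero_sub, hkey2]
    calc (cayley S).dist 0 ((τ2 - τ1) + (γ n - p 0) + (- Bsum) + b j • s)
        ≤ (cayley S).dist 0 ((τ2 - τ1) + (γ n - p 0) + (- Bsum)) +
          (cayley S).dist 0 (b j • s) := dist_zero_add_le hconn _ _
      _ ≤ ((cayley S).dist 0 ((τ2 - τ1) + (γ n - p 0)) +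
          (cayley S).dist 0 (- Bsum)) + (cayley S).dist 0 (b j • s) :=
            Nat.add_le_add_right (dist_zero_add_le hconn _ _) _
      _ ≤ (((cayley S).dist 0 (τ2 - τ1) + (cayley S).dist 0 (γ n - p 0)) +
          (cayley S).dist 0 (- Bsum)) + (cayley S).dist 0 (b j • s) :=
            Nat.add_le_add_right (Nat.add_le_add_right (dist_zero_add_le hconn _ _) _) _
      _ ≤ ((M + c) + b j) + b j :=
            add_le_add (add_le_add (add_le_add hd1 hd2) hd3) hd4
      _ = M + c + b j + b j := by ring
  calc (cayley S).dist (p j) (γ (n + (j : ℕ))) ≤ M + c + b j + b j := hfinal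
    _ ≤ M + c + (4 * c * Nn + 4 * c * Nn) := by omega
end

section
/- Let G and G' be finitely generated Abelian groups, let S ⊆ G and S' ⊆ G' be symmetric finite generating sets, and let φ : Cay(G,S) → Cay(G',S') be a graph isomorphism. If γ : ℤ → G is an algebraic line in Cay(G,S) (of type s for some s ∈ S) that is a quasi-convex geodesic line, then φ ∘ γ is a quasi-algebraic quasi-convex geodesic line in Cay(G',S'); in particular all steps φ(γ(n+1)) − φ(γ(n)) have the same image under π_{G'}. -/
section AuxIso

variable {V : Type*} {W : Type*} {A : SimpleGraph V} {B : SimpleGraph W}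

private lemma cayleyAux_edist_le (ψ : A ≃g B) (a b : V) :
    B.edist (ψ a) (ψ b) ≤ A.edist a b := by
  rw [SimpleGraph.edist_eq_sInf (G := A)]
  refine le_sInf ?_
  rintro x ⟨w, rfl⟩
  calc B.edist (ψ a) (ψ b) ≤ ((w.map ψ.toHom).length : ℕ∞) := SimpleGraph.edist_le _
    _ = (w.length : ℕ∞) := by rw [SimpleGraph.Walk.length_map]

private lemma cayleyAux_edist_iso (ψ : A ≃g B) (a b : V) :
    B.edist (ψ a) (ψ b) = A.edist a b := by
  refine le_antisymm (cayleyAux_edist_le ψ a b) ?_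
  have h := cayleyAux_edist_le ψ.symm (ψ a) (ψ b)
  rw [RelIso.symm_apply_apply, RelIso.symm_apply_apply] at h
  exact h

private lemma cayleyAux_dist_iso (ψ : A ≃g B) (a b : V) :
    B.dist (ψ a) (ψ b) = A.dist a b := by
  show (B.edist (ψ a) (ψ b)).toNat = (A.edist a b).toNat
  rw [cayleyAux_edist_iso]

end AuxIso

/-- The heart of the argument: if `F : G' → G'` is injective, all displacements
`F x - x` lie in the symmetric generating set `S'` (and are nonzero), and `F` moves
neighbours to neighbours (so that `t ↦ F (x + t) - F x` permutes `S' \ {0}`), then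
the image of the displacement in `G' ⧸ tors G'` is a "harmonic" function with finitely
many values, hence constant, by a maximum principle. -/
private lemma cayleyAux_disp_const {G' : Type*} [AddCommGroup G'] [AddGroup.FG G']
    (S' : Set G') (hS'fin : S'.Finite) (hS'sym : ∀ t ∈ S', -t ∈ S')
    (hS'gen : AddSubgroup.closure S' = ⊤)
    (F : G' → G') (hFinj : Function.Injective F)
    (hFD : ∀ x : G', F x - x ∈ S' ∧ F x - x ≠ 0)
    (hFadj : ∀ (x t : G'), t ∈ S' → t ≠ 0 →
      (F (x + t) - F x ∈ S' ∧ F (x + t) - F x ≠ 0))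
    (x y : G') :
    QuotientAddGroup.mk' (AddCommGroup.torsion G') (F x - x) =
      QuotientAddGroup.mk' (AddCommGroup.torsion G') (F y - y) := by
  classical
  -- the finite symmetric set of allowed steps
  set D : Finset G' := hS'fin.toFinset.erase 0 with hDdef
  have hmemD : ∀ t : G', t ∈ D ↔ t ∈ S' ∧ t ≠ 0 := by
    intro t
    rw [hDdef, Finset.mem_erase, Set.Finite.mem_toFinset]
    tauto
  -- the permutation of D induced by F at each point
  have hinjx : ∀ z : G', Function.Injective (fun t : G' => F (z + t) - F z) := by
    intro z t t' htt
    simp only at htt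
    have h1 : F (z + t) = F (z + t') := sub_left_injective htt
    exact add_left_cancel (hFinj h1)
  have himg : ∀ z : G', D.image (fun t => F (z + t) - F z) = D := by
    intro z
    refine Finset.eq_of_subset_of_card_le ?_ ?_
    · intro u hu
      obtain ⟨t, ht, rfl⟩ := Finset.mem_image.mp hu
      obtain ⟨htS, ht0⟩ := (hmemD t).mp ht
      exact (hmemD _).mpr (hFadj z t htS ht0)
    · rw [Finset.card_image_of_injective _ (hinjx z)]
  -- module-theoretic set-up on the torsion-free quotient
  haveI hMF : Module.Finite ℤ G' := Module.Finite.iff_addGroup_fg.mpr inferInstance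
  haveI hMFQ : Module.Finite ℤ (G' ⧸ AddCommGroup.torsion G') :=
    Module.Finite.of_surjective
      ((QuotientAddGroup.mk' (AddCommGroup.torsion G')).toIntLinearMap)
      (QuotientAddGroup.mk'_surjective _)
  haveI hNZ : NoZeroSMulDivisors ℤ (G' ⧸ AddCommGroup.torsion G') :=
    IsAddTorsionFree.to_noZeroSMulDivisors_int
  haveI hFree : Module.Free ℤ (G' ⧸ AddCommGroup.torsion G') :=
    Module.free_of_finite_type_torsion_free'
  set b := Module.Free.chooseBasis ℤ (G' ⧸ AddCommGroup.torsion G') with hbdef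
  -- it suffices to compare all coordinates
  have coordKey : ∀ i : Module.Free.ChooseBasisIndex ℤ (G' ⧸ AddCommGroup.torsion G'),
      b.repr (QuotientAddGroup.mk' (AddCommGroup.torsion G') (F x - x)) i =
        b.repr (QuotientAddGroup.mk' (AddCommGroup.torsion G') (F y - y)) i := by
    intro i
    set ψ : G' →+ ℤ :=
      AddMonoidHom.comp (b.coord i).toAddMonoidHom
        (QuotientAddGroup.mk' (AddCommGroup.torsion G')) with hψdef
    have hψeval : ∀ d : G',
        ψ d = b.repr (QuotientAddGroup.mk' (AddCommGroup.torsion G') d) i := by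
      intro d
      rw [hψdef]
      simp [Module.Basis.coord_apply]
    set g : G' → ℤ := fun z => ψ (F z - z) with hgdef
    -- the harmonic identity
    have hdiff : ∀ z t : G', g (z + t) - g z = ψ (F (z + t) - F z) - ψ t := by
      intro z t
      show ψ (F (z + t) - (z + t)) - ψ (F z - z) = ψ (F (z + t) - F z) - ψ t
      rw [← map_sub ψ, ← map_sub ψ]
      congr 1
      abel
    have hharm : ∀ z : G', ∑ t ∈ D, (g (z + t) - g z) = 0 := by
      intro z
      have h2 : ∑ t ∈ D, (g (z + t) - g z)
          = (∑ t ∈ D, ψ (F (z + t) - F z)) - ∑ t ∈ D, ψ t := by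
        rw [← Finset.sum_sub_distrib]
        exact Finset.sum_congr rfl fun t _ => hdiff z t
      have h4 : ∑ u ∈ D.image (fun t => F (z + t) - F z), ψ u
          = ∑ t ∈ D, ψ (F (z + t) - F z) :=
        Finset.sum_image (fun a _ a' _ hh => hinjx z hh)
      rw [himg z] at h4
      rw [h2, ← h4, sub_self]
    -- the range of g is finite
    have hrfin : (Set.range g).Finite := by
      refine Set.Finite.subset (hS'fin.image ψ) ?_
      rintro _ ⟨z, rfl⟩
      exact ⟨F z - z, (hFD z).1, rfl⟩
    have hrne : (Set.range g).Nonempty := ⟨g 0, ⟨0, rfl⟩⟩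
    obtain ⟨M, hMmem, hMmax⟩ :
        ∃ M ∈ Set.range g, ∀ w ∈ Set.range g, w ≤ M := by
      have hne' : hrfin.toFinset.Nonempty := by
        rwa [Set.Finite.toFinset_nonempty]
      refine ⟨hrfin.toFinset.max' hne', ?_, ?_⟩
      · have := hrfin.toFinset.max'_mem hne'
        rwa [Set.Finite.mem_toFinset] at this
      · intro w hw
        exact hrfin.toFinset.le_max' w ((Set.Finite.mem_toFinset _).mpr hw)
    obtain ⟨x₀, hx₀⟩ := hMmem
    -- the maximum set is closed under adding elements of D
    have hstepA : ∀ z : G', g z = M → ∀ t ∈ D, g (z + t) = M := by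
      intro z hz t ht
      have hle : ∀ u ∈ D, g (z + u) - g z ≤ 0 := by
        intro u _
        have h5 : g (z + u) ≤ M := hMmax _ ⟨z + u, rfl⟩
        omega
      have h6 := (Finset.sum_eq_zero_iff_of_nonpos hle).mp (hharm z) t ht
      omega
    -- the stabilizer of the maximum set is a subgroup containing S'
    set A : Set G' := {z | g z = M} with hAdef
    set H : AddSubgroup G' :=
      { carrier := {a | ∀ z : G', z + a ∈ A ↔ z ∈ A}
        zero_mem' := by intro z; simp
        add_mem' := by
          intro a a' ha ha' z
          rw [← add_assoc]
          exact (ha' (z + a)).trans (ha z)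
        neg_mem' := by
          intro a ha z
          have h7 := ha (z + -a)
          rw [neg_add_cancel_right] at h7
          exact h7.symm } with hHdef
    have hS'H : S' ⊆ ↑H := by
      intro t ht
      show ∀ z : G', z + t ∈ A ↔ z ∈ A
      intro z
      by_cases h0 : t = 0
      · subst h0; simp
      · have htD : t ∈ D := (hmemD t).mpr ⟨ht, h0⟩
        have hmt : -t ∈ D := (hmemD (-t)).mpr ⟨hS'sym t ht, neg_ne_zero.mpr h0⟩
        constructor
        · intro hzt
          have h8 := hstepA _ hzt _ hmt
          rwa [add_neg_cancel_right] at h8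
        · intro hz
          exact hstepA _ hz _ htD
    have hHtop : (⊤ : AddSubgroup G') ≤ H := by
      rw [← hS'gen]
      exact (AddSubgroup.closure_le H).mpr hS'H
    have hconst : ∀ z : G', g z = M := by
      intro z
      have hmem : (z - x₀) ∈ H := hHtop (AddSubgroup.mem_top _)
      have h9 := hmem x₀
      rw [show x₀ + (z - x₀) = z from by abel] at h9
      exact h9.mpr hx₀
    calc b.repr (QuotientAddGroup.mk' (AddCommGroup.torsion G') (F x - x)) i
        = g x := (hψeval _).symm
      _ = M := hconst x
      _ = g y := (hconst y).symm
      _ = b.repr (QuotientAddGroup.mk' (AddCommGroup.torsion G') (F y - y)) i :=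
          hψeval _
  apply b.repr.injective
  exact Finsupp.ext coordKey

/-- A graph isomorphism between Cayley graphs of finitely generated Abelian groups
(w.r.t. symmetric finite generating sets) maps algebraic quasi-convex geodesic lines
to quasi-algebraic quasi-convex geodesic lines; in particular all steps of the image
line have the same image in `G'/tors G'`. -/
theorem iso_map_algebraic_to_quasiAlgebraic {G G' : Type*} [AddCommGroup G]
    [AddCommGroup G'] [AddGroup.FG G] [AddGroup.FG G'] (S : Set G) (S' : Set G')
    (hSfin : S.Finite) (hSsym : ∀ t ∈ S, -t ∈ S) (hSgen : AddSubgroup.closure S = ⊤)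
    (hS'fin : S'.Finite) (hS'sym : ∀ t ∈ S', -t ∈ S')
    (hS'gen : AddSubgroup.closure S' = ⊤)
    (φ : cayley S ≃g cayley S')
    (γ : ℤ → G) (s : G) (hs : s ∈ S) (h : G) (hγalg : ∀ n : ℤ, γ n = h + n • s)
    (hγ : IsQuasiConvexGeodesicLine (cayley S) γ) :
    (∃ s' ∈ S',
        IsQuasiAlgebraicLine S' (QuotientAddGroup.mk' (AddCommGroup.torsion G') s')
          (fun n => φ (γ n))) ∧
      IsQuasiConvexGeodesicLine (cayley S') (fun n => φ (γ n)) := by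
  classical
  -- basic facts about the algebraic line
  have hstep_src : ∀ n : ℤ, γ (n + 1) - γ n = s := by
    intro n
    rw [hγalg, hγalg, add_zsmul, one_zsmul]
    abel
  have hs0 : s ≠ 0 := by
    intro h0
    have h1 : γ 1 = γ 0 := by
      have h2 := hstep_src 0
      rw [h0, sub_eq_zero] at h2
      simpa using h2
    have hd := hγ.1 1 0
    rw [h1, SimpleGraph.dist_self] at hd
    simp at hd
  have hadj_src : ∀ n : ℤ, (cayley S).Adj (γ n) (γ (n + 1)) := by
    intro n
    refine ⟨?_, Or.inl ?_⟩
    · intro he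
      exact hs0 (by rw [← hstep_src n, ← he, sub_self])
    · rw [hstep_src n]; exact hs
  -- the conjugated translation F
  have hadj_trans : ∀ a b : G, (cayley S).Adj a b → (cayley S).Adj (a + s) (b + s) := by
    rintro a b ⟨hne, hor⟩
    refine ⟨fun hh => hne (add_right_cancel hh), ?_⟩
    rw [add_sub_add_right_eq_sub, add_sub_add_right_eq_sub]
    exact hor
  have hFadj' : ∀ {u v : G'}, (cayley S').Adj u v →
      (cayley S').Adj (φ (φ.symm u + s)) (φ (φ.symm v + s)) := by
    intro u v huv
    have h1 : (cayley S).Adj (φ.symm u) (φ.symm v) := φ.symm.map_rel_iff.mpr huv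
    exact φ.map_rel_iff.mpr (hadj_trans _ _ h1)
  have hFinj : Function.Injective (fun u : G' => φ (φ.symm u + s)) := by
    intro u v huv
    simp only at huv
    have h1 : φ.symm u + s = φ.symm v + s := by
      have h2 := congrArg φ.symm huv
      rwa [RelIso.symm_apply_apply, RelIso.symm_apply_apply] at h2
    have h3 : φ.symm u = φ.symm v := add_right_cancel h1
    have h4 := congrArg φ h3
    rwa [RelIso.apply_symm_apply, RelIso.apply_symm_apply] at h4
  have hadj_self : ∀ u : G', (cayley S').Adj u (φ (φ.symm u + s)) := by
    intro u
    have h1 : (cayley S).Adj (φ.symm u) (φ.symm u + s) := by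
      refine ⟨?_, Or.inl ?_⟩
      · intro hh
        exact hs0 (left_eq_add.mp hh)
      · rw [add_sub_cancel_left]; exact hs
    have h2 := φ.map_rel_iff.mpr h1
    rwa [RelIso.apply_symm_apply] at h2
  -- memberships of the displacements
  have hmemS' : ∀ {a b : G'}, (cayley S').Adj a b → (b - a ∈ S' ∧ b - a ≠ 0) := by
    rintro a b ⟨hne, hor⟩
    constructor
    · rcases hor with h1 | h1
      · exact h1
      · have h2 := hS'sym _ h1
        rwa [neg_sub] at h2
    · intro h0
      rw [sub_eq_zero] at h0
      exact hne h0.symm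
  have hFD : ∀ u : G', φ (φ.symm u + s) - u ∈ S' ∧ φ (φ.symm u + s) - u ≠ 0 :=
    fun u => hmemS' (hadj_self u)
  have hFadj : ∀ (u t : G'), t ∈ S' → t ≠ 0 →
      (φ (φ.symm (u + t) + s) - φ (φ.symm u + s) ∈ S' ∧
        φ (φ.symm (u + t) + s) - φ (φ.symm u + s) ≠ 0) := by
    intro u t htS ht0
    have hadj1 : (cayley S').Adj u (u + t) := by
      refine ⟨?_, Or.inl ?_⟩
      · intro hh
        exact ht0 (left_eq_add.mp hh)
      · rw [add_sub_cancel_left]; exact htS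
    exact hmemS' (hFadj' hadj1)
  -- constancy of the displacement class
  have key : ∀ u v : G',
      QuotientAddGroup.mk' (AddCommGroup.torsion G') (φ (φ.symm u + s) - u) =
        QuotientAddGroup.mk' (AddCommGroup.torsion G') (φ (φ.symm v + s) - v) :=
    cayleyAux_disp_const S' hS'fin hS'sym hS'gen
      (fun u => φ (φ.symm u + s)) hFinj hFD hFadj
  -- relating F to the steps of the image line
  have hγs : ∀ n : ℤ, γ n + s = γ (n + 1) := by
    intro n
    rw [← hstep_src n]
    abel
  have hFγ : ∀ n : ℤ, φ (φ.symm (φ (γ n)) + s) = φ (γ (n + 1)) := by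
    intro n
    rw [RelIso.symm_apply_apply, hγs n]
  constructor
  · -- quasi-algebraicity
    refine ⟨φ (γ 1) - φ (γ 0), ?_, ?_, ?_⟩
    · have h1 := (hFD (φ (γ 0))).1
      rw [hFγ 0] at h1
      simpa using h1
    · intro n
      exact φ.map_rel_iff.mpr (hadj_src n)
    · intro n
      show QuotientAddGroup.mk' (AddCommGroup.torsion G') (φ (γ (n + 1)) - φ (γ n)) =
        QuotientAddGroup.mk' (AddCommGroup.torsion G') (φ (γ 1) - φ (γ 0))
      have e1 : φ (γ (n + 1)) - φ (γ n) = φ (φ.symm (φ (γ n)) + s) - φ (γ n) := by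
        rw [hFγ n]
      have e2 : φ (γ 1) - φ (γ 0) = φ (φ.symm (φ (γ 0)) + s) - φ (γ 0) := by
        rw [hFγ 0]
        norm_num
      rw [e1, e2]
      exact key (φ (γ n)) (φ (γ 0))
  · -- quasi-convexity is transported
    obtain ⟨hgeo, hqc⟩ := hγ
    have hdind : ∀ u v : G',
        (cayley S).dist (φ.symm u) (φ.symm v) = (cayley S').dist u v :=
      fun u v => cayleyAux_dist_iso φ.symm u v
    constructor
    · intro j k
      show (cayley S').dist (φ (γ j)) (φ (γ k)) = (j - k).natAbs
      rw [cayleyAux_dist_iso φ (γ j) (γ k)]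
      exact hgeo j k
    · intro c
      obtain ⟨C, hC⟩ := hqc c
      refine ⟨C, ?_⟩
      intro n m hnm x y hx hy p hseg hp0 hpk j hj
      have hx' : (cayley S).dist (φ.symm x) (γ n) ≤ c := by
        have h1 : (cayley S).dist (φ.symm x) (φ.symm (φ (γ n))) ≤ c := by
          rw [hdind]
          exact hx
        rwa [RelIso.symm_apply_apply] at h1
      have hy' : (cayley S).dist (φ.symm y) (γ m) ≤ c := by
        have h1 : (cayley S).dist (φ.symm y) (φ.symm (φ (γ m))) ≤ c := by
          rw [hdind]
          exact hy
        rwa [RelIso.symm_apply_apply] at h1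
      have hdk : (cayley S).dist (φ.symm x) (φ.symm y) = (cayley S').dist x y :=
        hdind x y
      have happ := hC n m hnm (φ.symm x) (φ.symm y) hx' hy' (fun i => φ.symm (p i))
      rw [hdk] at happ
      have hseg' : IsGeodesicSegment (cayley S) ((cayley S').dist x y)
          (fun i => φ.symm (p i)) := by
        constructor
        · intro i hi
          exact φ.symm.map_rel_iff.mpr (hseg.1 i hi)
        · show (cayley S).dist (φ.symm (p 0)) (φ.symm (p ((cayley S').dist x y)))
            = (cayley S').dist x y
          rw [hdind]
          exact hseg.2
      have hres := happ hseg' (congrArg φ.symm hp0) (congrArg φ.symm hpk) j hj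
      have h2 : (cayley S).dist (φ.symm (p j)) (φ.symm (φ (γ (n + (j : ℤ))))) ≤ C := by
        rwa [RelIso.symm_apply_apply]
      rw [hdind] at h2
      exact h2
end

section
/- Let G and G' be finitely generated Abelian groups, let S ⊆ G and S' ⊆ G' be symmetric finite generating sets, let s ∈ S, and let γ, η : ℤ → G be quasi-algebraic lines in Cay(G,S), both of quasi-type π_G(s). Suppose φ : Cay(G,S) → Cay(G',S') is a graph isomorphism such that γ' := φ ∘ γ and η' := φ ∘ η are quasi-algebraic lines in Cay(G',S'). Then γ' and η' have the same quasi-type. -/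
/-- Reachability in at most `k` steps. -/
def reachN {V : Type*} (Γ : SimpleGraph V) : ℕ → V → V → Prop
  | 0, x, y => x = y
  | k+1, x, y => reachN Γ k x y ∨ ∃ z, Γ.Adj x z ∧ reachN Γ k z y

lemma reachN_mono {V : Type*} {Γ : SimpleGraph V} {k k' : ℕ} (h : k ≤ k') {x y : V}
    (hr : reachN Γ k x y) : reachN Γ k' x y := by
  induction h with
  | refl => exact hr
  | step _ ih => exact Or.inl ih

lemma reachN_map {V V' : Type*} {Γ : SimpleGraph V} {Γ' : SimpleGraph V'} (φ : Γ ≃g Γ')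
    {k : ℕ} {x y : V} (hr : reachN Γ k x y) : reachN Γ' k (φ x) (φ y) := by
  induction k generalizing x with
  | zero => exact congrArg φ hr
  | succ k ih =>
    rcases hr with h | ⟨z, hadj, hz⟩
    · exact Or.inl (ih h)
    · exact Or.inr ⟨φ z, φ.map_adj_iff.mpr hadj, ih hz⟩

lemma reachN_of_list {G : Type*} [AddCommGroup G] (S : Set G) :
    ∀ (l : List G), (∀ a ∈ l, a ∈ S ∨ -a ∈ S) → ∀ x : G,
      reachN (cayley S) l.length x (x + l.sum) := by
  intro l
  induction l with
  | nil => intro _ x; show x = x + 0; rw [add_zero]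
  | cons a t ih =>
    intro hmem x
    have ht : ∀ b ∈ t, b ∈ S ∨ -b ∈ S := fun b hb => hmem b (List.mem_cons_of_mem a hb)
    by_cases ha : a = 0
    · refine Or.inl ?_
      have := ih ht x
      simpa [ha] using this
    · refine Or.inr ⟨x + a, ?_, ?_⟩
      · show x ≠ x + a ∧ _
        refine ⟨fun h => ha (by simpa using h.symm), ?_⟩
        rcases hmem a List.mem_cons_self with h | h
        · left; simpa using h
        · right; simpa using h
      · have := ih ht (x + a)
        have hsum : x + (a :: t).sum = x + a + t.sum := by
          simp [List.sum_cons, add_assoc]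
        rw [hsum]
        exact this

lemma list_of_reachN {G : Type*} [AddCommGroup G] {S : Set G} :
    ∀ (k : ℕ) (x y : G), reachN (cayley S) k x y →
      ∃ l : List G, l.length ≤ k ∧ (∀ a ∈ l, a ∈ S ∨ -a ∈ S) ∧ l.sum = y - x := by
  intro k
  induction k with
  | zero =>
    intro x y h
    exact ⟨[], le_refl _, by simp, by simp [show x = y from h]⟩
  | succ k ih =>
    intro x y h
    rcases h with h | ⟨z, hadj, hz⟩
    · obtain ⟨l, h1, h2, h3⟩ := ih x y h
      exact ⟨l, h1.trans (Nat.le_succ k), h2, h3⟩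
    · obtain ⟨l, h1, h2, h3⟩ := ih z y hz
      refine ⟨(z - x) :: l, by simpa using h1, ?_, ?_⟩
      · intro a hamem
        rcases List.mem_cons.mp hamem with rfl | hb
        · rcases (show x ≠ z ∧ (z - x ∈ S ∨ x - z ∈ S) from hadj).2 with h | h
          · exact Or.inl h
          · exact Or.inr (by simpa [neg_sub] using h)
        · exact h2 a hb
      · rw [List.sum_cons, h3]; abel

lemma ball_finite {G : Type*} [AddCommGroup G] {S : Set G} (hS : S.Finite) :
    ∀ c : ℕ, {g : G | ∃ l : List G, l.length ≤ c ∧ (∀ a ∈ l, a ∈ S ∨ -a ∈ S) ∧ l.sum = g}.Finite := by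
  intro c
  induction c with
  | zero =>
    refine Set.Finite.subset (Set.finite_singleton 0) ?_
    rintro g ⟨l, h1, _, h3⟩
    have : l = [] := List.eq_nil_of_length_eq_zero (Nat.le_zero.mp h1)
    simp [this] at h3
    simp [← h3]
  | succ c ih =>
    have hT : (S ∪ -S).Finite := hS.union hS.neg
    refine Set.Finite.subset (ih.union (hT.biUnion (fun a _ =>
      ih.image (fun g => a + g)))) ?_
    rintro g ⟨l, h1, h2, h3⟩
    cases l with
    | nil => exact Or.inl ⟨[], by simp, by simp, by simpa using h3⟩
    | cons a t =>
      have haT : a ∈ S ∪ -S := by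
        rcases h2 a List.mem_cons_self with h | h
        · exact Or.inl h
        · exact Or.inr (Set.mem_neg.mpr h)
      refine Or.inr (Set.mem_biUnion haT
        ⟨t.sum, ⟨t, by simpa using h1, fun b hb => h2 b (List.mem_cons_of_mem a hb), rfl⟩, ?_⟩)
      simpa [List.sum_cons] using h3

lemma line_proj {A : Type*} [AddCommGroup A] (f : ℤ → A) (t : A)
    (h : ∀ n : ℤ, f (n + 1) = f n + t) : ∀ n : ℤ, f n = f 0 + n • t := by
  intro n
  induction n using Int.induction_on with
  | zero => simp
  | succ k ihk => rw [h k, ihk]; push_cast; rw [add_smul, one_smul]; abel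
  | pred k ihk =>
    have h1 := h (-(k : ℤ) - 1)
    have h2 : (-(k : ℤ) - 1) + 1 = -(k : ℤ) := by ring
    rw [h2] at h1
    have h3 : f (-(k : ℤ) - 1) = f (-(k : ℤ)) - t := eq_sub_of_add_eq h1.symm
    rw [h3, ihk, sub_smul, one_smul]
    abel


lemma exists_word {G : Type*} [AddCommGroup G] {S : Set G} (hSgen : AddSubgroup.closure S = ⊤)
    (d : G) : ∃ l : List G, (∀ a ∈ l, a ∈ S ∨ -a ∈ S) ∧ l.sum = d := by
  have hd : d ∈ AddSubgroup.closure S := by rw [hSgen]; trivial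
  refine AddSubgroup.closure_induction (fun x hx => ⟨[x], by simp [hx], by simp⟩)
    ⟨[], by simp, by simp⟩ ?_ ?_ hd
  · rintro x y _ _ ⟨l1, h1, h2⟩ ⟨l2, h3, h4⟩
    refine ⟨l1 ++ l2, ?_, by simp [h2, h4]⟩
    intro a ha
    rcases List.mem_append.mp ha with h | h
    exacts [h1 a h, h3 a h]
  · rintro x _ ⟨l, h1, h2⟩
    refine ⟨l.map Neg.neg, ?_, ?_⟩
    · intro a ha
      obtain ⟨b, hb, rfl⟩ := List.mem_map.mp ha
      rcases h1 b hb with h | h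
      · exact Or.inr (by simpa using h)
      · exact Or.inl h
    · have : ∀ t : List G, (t.map Neg.neg).sum = -t.sum := by
        intro t
        induction t with
        | nil => simp
        | cons a t ih => simp [ih]; abel
      rw [this, h2]

lemma qal_proj {G : Type*} [AddCommGroup G] {S : Set G} {t : G ⧸ AddCommGroup.torsion G}
    {γ : ℤ → G} (h : IsQuasiAlgebraicLine S t γ) (n : ℤ) :
    QuotientAddGroup.mk' (AddCommGroup.torsion G) (γ n)
      = QuotientAddGroup.mk' (AddCommGroup.torsion G) (γ 0) + n • t := by
  refine line_proj (fun n => QuotientAddGroup.mk' (AddCommGroup.torsion G) (γ n)) t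
    (fun n => ?_) n
  have h1 := h.2 n
  rw [map_sub] at h1
  show QuotientAddGroup.mk' (AddCommGroup.torsion G) (γ (n + 1))
    = QuotientAddGroup.mk' (AddCommGroup.torsion G) (γ n) + t
  rw [eq_add_of_sub_eq h1, add_comm]

lemma torsion_finite (G : Type*) [AddCommGroup G] [AddGroup.FG G] :
    Finite (AddCommGroup.torsion G) := by
  have h1 : Module.Finite ℤ G := Module.Finite.iff_addGroup_fg.mpr inferInstance
  have h3 : (AddSubgroup.toIntSubmodule (AddCommGroup.torsion G)).FG :=
    IsNoetherian.noetherian _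
  have h4 : Module.Finite ℤ (AddCommGroup.torsion G) := Module.Finite.iff_fg.mpr h3
  have h5 : AddGroup.FG (AddCommGroup.torsion G) := Module.Finite.iff_addGroup_fg.mp h4
  exact AddCommGroup.finite_of_fg_torsion (AddCommGroup.torsion G)
    (fun x => AddSubmonoid.isOfFinAddOrder_coe.mp x.2)

/-- **Parallel lines and quasi-type.** If `γ, η` are quasi-algebraic lines in `Cay(G,S)`
of the same quasi-type `π_G s`, and a graph isomorphism `φ : Cay(G,S) → Cay(G',S')`
maps them to quasi-algebraic lines `φ ∘ γ` and `φ ∘ η` in `Cay(G',S')`, then `φ ∘ γ`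
and `φ ∘ η` have the same quasi-type. -/
theorem parallel_lines_same_quasiType {G G' : Type*} [AddCommGroup G] [AddCommGroup G']
    [AddGroup.FG G] [AddGroup.FG G'] (S : Set G) (S' : Set G')
    (hSfin : S.Finite) (hSsym : ∀ t ∈ S, -t ∈ S) (hSgen : AddSubgroup.closure S = ⊤)
    (hS'fin : S'.Finite) (hS'sym : ∀ t ∈ S', -t ∈ S')
    (hS'gen : AddSubgroup.closure S' = ⊤)
    (s : G) (hs : s ∈ S) (γ η : ℤ → G)
    (hγ : IsQuasiAlgebraicLine S (QuotientAddGroup.mk' (AddCommGroup.torsion G) s) γ)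
    (hη : IsQuasiAlgebraicLine S (QuotientAddGroup.mk' (AddCommGroup.torsion G) s) η)
    (φ : cayley S ≃g cayley S')
    (u v : G' ⧸ AddCommGroup.torsion G')
    (hγ' : IsQuasiAlgebraicLine S' u (fun n => φ (γ n)))
    (hη' : IsQuasiAlgebraicLine S' v (fun n => φ (η n))) :
    u = v := by
  classical
  by_contra hne
  have hTfin : Finite (AddCommGroup.torsion G) := torsion_finite G
  -- the difference line in G lies in a finite set
  have hγp := qal_proj hγ
  have hηp := qal_proj hη
  have hδ : ∀ n : ℤ, γ n - η n - (γ 0 - η 0) ∈ AddCommGroup.torsion G := by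
    intro n
    have h0 : QuotientAddGroup.mk' (AddCommGroup.torsion G) (γ n - η n - (γ 0 - η 0)) = 0 := by
      simp only [map_sub, hγp n, hηp n]
      abel
    exact (QuotientAddGroup.eq_zero_iff _).mp h0
  set D : Set G := (fun t => (γ 0 - η 0) + t) '' ((AddCommGroup.torsion G : AddSubgroup G) : Set G)
    with hD_def
  have hDfin : D.Finite := Set.Finite.image _ (Set.toFinite _)
  have hmemD : ∀ n : ℤ, γ n - η n ∈ D := fun n =>
    ⟨γ n - η n - (γ 0 - η 0), hδ n, by abel⟩
  -- words for every group element
  have hword : ∀ d : G, ∃ l : List G, (∀ a ∈ l, a ∈ S ∨ -a ∈ S) ∧ l.sum = d :=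
    exists_word hSgen
  choose L hL1 hL2 using hword
  set c : ℕ := hDfin.toFinset.sup (fun d => (L d).length) with hc_def
  have hreach : ∀ n : ℤ, reachN (cayley S) c (η n) (γ n) := by
    intro n
    have h1 := reachN_of_list S (L (γ n - η n)) (hL1 _) (η n)
    rw [hL2] at h1
    have h2 : η n + (γ n - η n) = γ n := by abel
    rw [h2] at h1
    exact reachN_mono (Finset.le_sup (f := fun d => (L d).length)
      (hDfin.mem_toFinset.mpr (hmemD n))) h1
  have hreach' : ∀ n : ℤ, reachN (cayley S') c (φ (η n)) (φ (γ n)) :=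
    fun n => reachN_map φ (hreach n)
  set B : Set G' :=
    {g : G' | ∃ l : List G', l.length ≤ c ∧ (∀ a ∈ l, a ∈ S' ∨ -a ∈ S') ∧ l.sum = g} with hB_def
  have hBfin : B.Finite := ball_finite hS'fin c
  have hg : ∀ n : ℤ, φ (γ n) - φ (η n) ∈ B := by
    intro n
    obtain ⟨l, h1, h2, h3⟩ := list_of_reachN c _ _ (hreach' n)
    exact ⟨l, h1, h2, h3⟩
  -- the difference line in G' is injective, contradiction
  have hγ'p := qal_proj hγ'
  have hη'p := qal_proj hη'
  set π' : G' →+ G' ⧸ AddCommGroup.torsion G' :=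
    QuotientAddGroup.mk' (AddCommGroup.torsion G') with hπ'_def
  set q : ℤ → G' ⧸ AddCommGroup.torsion G' := fun n => π' (φ (γ n)) - π' (φ (η n)) with hq_def
  have hq : ∀ n : ℤ, q n = q 0 + n • (u - v) := by
    intro n
    have := hγ'p n
    have h1 : π' (φ (γ n)) = π' (φ (γ 0)) + n • u := hγ'p n
    have h2 : π' (φ (η n)) = π' (φ (η 0)) + n • v := hη'p n
    show π' (φ (γ n)) - π' (φ (η n)) = π' (φ (γ 0)) - π' (φ (η 0)) + n • (u - v)
    rw [h1, h2, smul_sub]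
    abel
  have htf : ∀ a : G' ⧸ AddCommGroup.torsion G', a ≠ 0 → ¬ IsOfFinAddOrder a :=
    fun a ha => isAddTorsionFree_iff_not_isOfFinAddOrder.mp inferInstance ha
  have huv : u - v ≠ 0 := sub_ne_zero.mpr hne
  have hinj : Function.Injective q := by
    intro m n hmn
    rw [hq m, hq n] at hmn
    have hmn2 : m • (u - v) = n • (u - v) := add_left_cancel hmn
    by_contra hmn'
    have h0 : (m - n) • (u - v) = 0 := by
      rw [sub_smul, hmn2, sub_self]
    exact htf (u - v) huv (isOfFinAddOrder_iff_zsmul_eq_zero.mpr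
      ⟨m - n, sub_ne_zero.mpr hmn', h0⟩)
  have hginj : Function.Injective (fun n : ℤ => φ (γ n) - φ (η n)) := by
    intro m n h
    have h' : φ (γ m) - φ (η m) = φ (γ n) - φ (η n) := h
    apply hinj
    simp only [hq_def]
    rw [← map_sub π' (φ (γ m)) (φ (η m)), ← map_sub π' (φ (γ n)) (φ (η n)), h']
  exact Set.infinite_range_of_injective hginj
    (hBfin.subset (Set.range_subset_iff.mpr hg))
end

section
/- Let G be a finitely generated Abelian group with rk G = d and |tors G| = k, and let S be a set of elements of G whose images form a ℤ-basis of G/tors G. Then the Cayley graph Cay(G, S ∪ tors G) is isomorphic to the Cartesian (box) product of the Cayley graph Cay(ℤ^d, {e₁, …, e_d}) (standard basis) with the complete graph K_k on k vertices. -/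
lemma cayley_adj' {G : Type*} [AddCommGroup G] (S : Set G) (a b : G) :
    (cayley S).Adj a b ↔ a ≠ b ∧ (b - a ∈ S ∨ a - b ∈ S) := Iff.rfl

/-- If `G` is a finitely generated Abelian group with `|tors G| = k`, and `f : Fin d → G`
is a family whose images form a `ℤ`-basis of `G/tors G` (so `rk G = d`), then
`Cay(G, range f ∪ tors G)` is isomorphic to the Cartesian (box) product of
`Cay(ℤ^d, {e₁, …, e_d})` with the complete graph `K_k` on `k` vertices. -/
theorem cayley_iso_boxProd {G : Type*} [AddCommGroup G] [AddGroup.FG G] (d k : ℕ)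
    (hk : Nat.card (AddCommGroup.torsion G) = k)
    (f : Fin d → G) (b : Module.Basis (Fin d) ℤ (G ⧸ AddCommGroup.torsion G))
    (hb : ∀ i, QuotientAddGroup.mk' (AddCommGroup.torsion G) (f i) = b i) :
    Nonempty
      (cayley (Set.range f ∪ (AddCommGroup.torsion G : Set G)) ≃g
        (cayley (Set.range fun i : Fin d => (Pi.single i 1 : Fin d → ℤ))).boxProd
          (⊤ : SimpleGraph (Fin k))) := by
  classical
  -- torsion is finite
  have hMF : Module.Finite ℤ G := Module.Finite.iff_addGroup_fg.mpr ‹AddGroup.FG G›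
  have h1 : Module.Finite ℤ (Submodule.torsion ℤ G) :=
    Module.Finite.iff_fg.mpr (IsNoetherian.noetherian _)
  have hfin : Finite (Submodule.torsion ℤ G) :=
    Module.finite_of_fg_torsion _ Submodule.torsion_isTorsion
  have hfinT : Finite (AddCommGroup.torsion G) := by
    rw [← Submodule.torsion_int]; exact hfin
  let eT : AddCommGroup.torsion G ≃ Fin k := Finite.equivFinOfCardEq hk
  let π : G →+ G ⧸ AddCommGroup.torsion G := QuotientAddGroup.mk' (AddCommGroup.torsion G)
  let φ : G → Fin d → ℤ := fun g => ⇑(b.repr (π g))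
  let s : (Fin d → ℤ) → G := fun v => ∑ i, v i • f i
  have hker : ∀ x : G, π x = 0 ↔ x ∈ AddCommGroup.torsion G := fun x => QuotientAddGroup.eq_zero_iff x
  have hs_add : ∀ v w : Fin d → ℤ, s (v + w) = s v + s w := by
    intro v w; simp [s, add_smul, Finset.sum_add_distrib]
  have hs_sub : ∀ v w : Fin d → ℤ, s (v - w) = s v - s w := by
    intro v w; simp [s, sub_smul, Finset.sum_sub_distrib]
  have hs_single : ∀ i, s (Pi.single i 1) = f i := by
    intro i
    simp only [s]
    rw [Finset.sum_eq_single i]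
    · simp
    · intro j _ hj; simp [Pi.single_apply, hj.symm]
    · simp
  have hφ_eq : ∀ g h : G, π g = π h → φ g = φ h := by
    intro g h e; simp only [φ, e]
  have hπs : ∀ v, π (s v) = ∑ i, v i • b i := by
    intro v
    simp only [s, map_sum, map_zsmul]
    exact Finset.sum_congr rfl fun i _ => by rw [hb i]
  have hφs : ∀ v, φ (s v) = v := by
    intro v
    simp only [φ, hπs]
    exact b.repr_sum_self v
  have hmemT : ∀ g : G, g - s (φ g) ∈ AddCommGroup.torsion G := by
    intro g
    rw [← hker]
    have h2 : π (s (φ g)) = π g := by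
      rw [hπs]; exact b.sum_repr (π g)
    rw [map_sub, h2, sub_self]
  -- key lemmas
  have keyT : ∀ a g : G, g - a ∈ AddCommGroup.torsion G ↔ φ a = φ g := by
    intro a g
    constructor
    · intro h
      apply hφ_eq
      have h0 : π (g - a) = 0 := (hker _).mpr h
      rw [map_sub, sub_eq_zero] at h0
      exact h0.symm
    · intro h
      have h2 : (g - s (φ g)) - (a - s (φ a)) ∈ AddCommGroup.torsion G := sub_mem (hmemT g) (hmemT a)
      have h3 : (g - s (φ g)) - (a - s (φ a)) = g - a := by rw [h]; abel
      rwa [h3] at h2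
  have keyF : ∀ (a g : G) (i : Fin d), g - a = f i ↔
      (φ g - φ a = Pi.single i 1 ∧ a - s (φ a) = g - s (φ g)) := by
    intro a g i
    constructor
    · intro h
      have hπg : π g = π a + b i := by
        rw [← sub_eq_iff_eq_add', ← map_sub, h]
        exact hb i
      have hφg : φ g = φ a + Pi.single i 1 := by
        simp only [φ, hπg, map_add, Module.Basis.repr_self, Finsupp.coe_add,
          Finsupp.single_eq_pi_single]
      constructor
      · rw [hφg]; abel
      · have hsg : s (φ g) = s (φ a) + f i := by
          rw [hφg, hs_add, hs_single]
        have hg : g = a + f i := by rw [← h]; abel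
        rw [hsg, hg]; abel
    · rintro ⟨h1, h2⟩
      have h3 : g - a = s (φ g) - s (φ a) := by
        have h4 : (g - s (φ g)) - (a - s (φ a)) = (g - a) - (s (φ g) - s (φ a)) := by abel
        rw [← h2, sub_self] at h4
        exact sub_eq_zero.mp h4.symm
      rw [h3, ← hs_sub, h1, hs_single]
  -- the isomorphism
  refine ⟨⟨⟨fun g => (φ g, eT ⟨g - s (φ g), hmemT g⟩),
      fun p => s p.1 + ((eT.symm p.2 : AddCommGroup.torsion G) : G), ?_, ?_⟩, ?_⟩⟩
  · intro g
    simp only [Equiv.symm_apply_apply]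
    show s (φ g) + (g - s (φ g)) = g
    abel
  · rintro ⟨v, j⟩
    have hcT : ((eT.symm j : AddCommGroup.torsion G) : G) ∈ AddCommGroup.torsion G := (eT.symm j).2
    have hφ : φ (s v + ((eT.symm j : AddCommGroup.torsion G) : G)) = v := by
      have hp : π (s v + ((eT.symm j : AddCommGroup.torsion G) : G)) = π (s v) := by
        rw [map_add, (hker _).mpr hcT, add_zero]
      rw [hφ_eq _ _ hp, hφs]
    refine Prod.ext hφ ?_
    have h2 : (⟨s v + ((eT.symm j : AddCommGroup.torsion G) : G) - s (φ (s v + ((eT.symm j : AddCommGroup.torsion G) : G))),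
        hmemT _⟩ : AddCommGroup.torsion G) = eT.symm j := by
      apply Subtype.ext
      show s v + ((eT.symm j : AddCommGroup.torsion G) : G) - s (φ (s v + ((eT.symm j : AddCommGroup.torsion G) : G)))
        = ((eT.symm j : AddCommGroup.torsion G) : G)
      rw [hφ]; abel
    show eT _ = j
    rw [h2, Equiv.apply_symm_apply]
  · intro a g
    rw [SimpleGraph.boxProd_adj]
    simp only [Equiv.coe_fn_mk, cayley_adj', SimpleGraph.top_adj, Set.mem_union,
      Set.mem_range, SetLike.mem_coe]
    constructor
    · rintro (⟨⟨hφne, hcase⟩, heq⟩ | ⟨hne, heq⟩)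
      · have hts : a - s (φ a) = g - s (φ g) := Subtype.ext_iff.mp (eT.injective heq)
        refine ⟨fun h => hφne (by rw [h]), ?_⟩
        rcases hcase with ⟨i, hi⟩ | ⟨i, hi⟩
        · exact Or.inl (Or.inl ⟨i, ((keyF a g i).mpr ⟨hi.symm, hts⟩).symm⟩)
        · exact Or.inr (Or.inl ⟨i, ((keyF g a i).mpr ⟨hi.symm, hts.symm⟩).symm⟩)
      · have hmem : g - a ∈ AddCommGroup.torsion G := (keyT a g).mpr heq
        refine ⟨?_, Or.inl (Or.inr hmem)⟩
        intro h; subst h; exact hne rfl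
    · rintro ⟨hne, (⟨i, hi⟩ | hm) | (⟨i, hi⟩ | hm)⟩
      · obtain ⟨h1, h2⟩ := (keyF a g i).mp hi.symm
        left
        refine ⟨⟨?_, Or.inl ⟨i, h1.symm⟩⟩, congrArg eT (Subtype.ext h2)⟩
        intro h
        rw [h, sub_self] at h1
        have h3 := congrFun h1 i
        simp at h3
      · have heq := (keyT a g).mp hm
        right
        refine ⟨?_, heq⟩
        intro h
        have hts : a - s (φ a) = g - s (φ g) := Subtype.ext_iff.mp (eT.injective h)
        apply hne
        have h4 : a - s (φ a) = g - s (φ a) := by rw [hts, heq]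
        exact sub_left_inj.mp h4
      · obtain ⟨h1, h2⟩ := (keyF g a i).mp hi.symm
        left
        refine ⟨⟨?_, Or.inr ⟨i, h1.symm⟩⟩, (congrArg eT (Subtype.ext h2)).symm⟩
        intro h
        rw [h, sub_self] at h1
        have h3 := congrFun h1 i
        simp at h3
      · have hm' : g - a ∈ AddCommGroup.torsion G := by
          rw [show g - a = -(a - g) by abel]; exact neg_mem hm
        have heq := (keyT a g).mp hm'
        right
        refine ⟨?_, heq⟩
        intro h
        have hts : a - s (φ a) = g - s (φ g) := Subtype.ext_iff.mp (eT.injective h)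
        apply hne
        have h4 : a - s (φ a) = g - s (φ a) := by rw [hts, heq]
        exact sub_left_inj.mp h4
end

section
/- Let G and G' be finitely generated Abelian groups. If G and G' admit isomorphic Cayley graphs, i.e., there exist finite generating sets S ⊆ G and S' ⊆ G' with Cay(G,S) ≅ Cay(G',S'), then rk G = rk G'. -/
open SimpleGraph

namespace CayAux

lemma iso_dist_le {V W : Type*} {Γ : SimpleGraph V} {Δ : SimpleGraph W} (φ : Γ ≃g Δ) (u v : V) :
      Δ.dist (φ u) (φ v) ≤ Γ.dist u v := by
    by_cases hr : Γ.Reachable u v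
    · obtain ⟨w, hw⟩ := hr.exists_walk_length_eq_dist
      calc Δ.dist (φ u) (φ v) ≤ (w.map φ.toHom).length := SimpleGraph.dist_le _
        _ = Γ.dist u v := by rw [SimpleGraph.Walk.length_map, hw]
    · have hr' : ¬ Δ.Reachable (φ u) (φ v) := by
        intro hc
        have := hc.map φ.symm.toHom
        simp at this
        exact hr this
      rw [SimpleGraph.dist_eq_zero_of_not_reachable hr,
        SimpleGraph.dist_eq_zero_of_not_reachable hr']

lemma iso_dist {V W : Type*} {Γ : SimpleGraph V} {Δ : SimpleGraph W} (φ : Γ ≃g Δ) (u v : V) :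
    Δ.dist (φ u) (φ v) = Γ.dist u v := by
  refine le_antisymm (iso_dist_le φ u v) ?_
  have := iso_dist_le φ.symm (φ u) (φ v)
  simpa using this

variable {G : Type*} [AddCommGroup G] (S : Set G)

lemma adj_translate (a g h : G) : (cayley S).Adj (g + a) (h + a) ↔ (cayley S).Adj g h := by
  simp only [cayley, add_sub_add_right_eq_sub, ne_eq, add_left_inj]

def transIso (a : G) : cayley S ≃g cayley S :=
  ⟨Equiv.addRight a, by intro g h; exact adj_translate S a g h⟩

@[simp] lemma transIso_apply (a g : G) : transIso S a g = g + a := rfl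

def negIso : cayley S ≃g cayley S :=
  ⟨Equiv.neg G, by
    intro g h
    simp only [cayley, Equiv.neg_apply, ne_eq, neg_inj, neg_sub_neg]
    constructor
    · rintro ⟨h1, h2⟩; exact ⟨h1, h2.symm⟩
    · rintro ⟨h1, h2⟩; exact ⟨h1, h2.symm⟩⟩

@[simp] lemma negIso_apply (g : G) : negIso S g = -g := rfl

lemma dist_translate (a g h : G) :
    (cayley S).dist (g + a) (h + a) = (cayley S).dist g h := iso_dist (transIso S a) g h

lemma dist_eq_dist_zero_sub (g h : G) :
    (cayley S).dist g h = (cayley S).dist 0 (h - g) := by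
  have := dist_translate S (-g) g h
  simpa [sub_eq_add_neg] using this.symm

lemma dist_zero_neg (g : G) : (cayley S).dist 0 (-g) = (cayley S).dist 0 g := by
  have := iso_dist (negIso S) 0 g
  simpa using this

variable (hS : AddSubgroup.closure S = ⊤)
include hS

lemma reachable_zero (g : G) : (cayley S).Reachable 0 g := by
  let H : AddSubgroup G :=
    { carrier := {g | (cayley S).Reachable 0 g}
      zero_mem' := Reachable.refl 0
      add_mem' := by
        intro a b ha hb
        have h2 : (cayley S).Reachable a (b + a) := by
          have := hb.map (transIso S a).toHom
          simpa using this
        exact ha.trans (by simpa [add_comm] using h2)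
      neg_mem' := by
        intro a ha
        have := ha.map (negIso S).toHom
        simpa using this }
  have hsub : S ⊆ H := by
    intro s hs
    by_cases h0 : s = (0 : G)
    · subst h0; exact Reachable.refl 0
    · exact SimpleGraph.Adj.reachable ⟨fun hc => h0 hc.symm, Or.inl (by simpa using hs)⟩
  have : (⊤ : AddSubgroup G) ≤ H := hS ▸ (AddSubgroup.closure_le H).2 hsub
  exact this (AddSubgroup.mem_top g)

lemma cayley_connected : (cayley S).Connected := by
  refine (SimpleGraph.connected_iff _).2 ⟨fun x y => ?_, ⟨0⟩⟩
  have := (reachable_zero S hS (y - x)).map (transIso S x).toHom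
  simpa using this

lemma dist_zero_add (x y : G) :
    (cayley S).dist 0 (x + y) ≤ (cayley S).dist 0 x + (cayley S).dist 0 y := by
  have h1 := (cayley_connected S hS).dist_triangle (u := 0) (v := x) (w := x + y)
  have h2 : (cayley S).dist x (x + y) = (cayley S).dist 0 y := by
    rw [dist_eq_dist_zero_sub]; simp
  omega

lemma dist_zero_nsmul (m : ℕ) (x : G) :
    (cayley S).dist 0 (m • x) ≤ m * (cayley S).dist 0 x := by
  induction m with
  | zero => simp
  | succ m ih =>
    rw [succ_nsmul]
    calc (cayley S).dist 0 (m • x + x) ≤ _ + _ := dist_zero_add S hS _ _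
      _ ≤ m * (cayley S).dist 0 x + (cayley S).dist 0 x := by omega
      _ = (m + 1) * (cayley S).dist 0 x := by ring

lemma dist_zero_zsmul (a : ℤ) (x : G) :
    (cayley S).dist 0 (a • x) ≤ a.natAbs * (cayley S).dist 0 x := by
  have key : (cayley S).dist 0 (a • x) = (cayley S).dist 0 (a.natAbs • x) := by
    rcases Int.natAbs_eq a with h | h
    · conv_lhs => rw [h]
      rw [natCast_zsmul]
    · conv_lhs => rw [h]
      rw [neg_zsmul, natCast_zsmul, dist_zero_neg]
  rw [key]; exact dist_zero_nsmul S hS _ x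

lemma dist_zero_sum {ι : Type*} (t : Finset ι) (f : ι → G) :
    (cayley S).dist 0 (∑ i ∈ t, f i) ≤ ∑ i ∈ t, (cayley S).dist 0 (f i) := by
  classical
  induction t using Finset.cons_induction with
  | empty => simp
  | cons a s ha ih =>
    rw [Finset.sum_cons, Finset.sum_cons]
    calc (cayley S).dist 0 (f a + ∑ i ∈ s, f i) ≤ _ + _ := dist_zero_add S hS _ _
      _ ≤ _ := by omega

end CayAux

namespace CayAux

variable {G : Type*} [AddCommGroup G] (S : Set G)

/-- the allowed one-step displacements, including `0` (stay put) -/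
def stepSet : Set G := insert 0 (S ∪ -S)

lemma zero_mem_stepSet : (0 : G) ∈ stepSet S := Set.mem_insert _ _

lemma dist_zero_le_one {x : G} (hx : x ∈ stepSet S) : (cayley S).dist 0 x ≤ 1 := by
  by_cases h0 : x = 0
  · simp [h0, SimpleGraph.dist_self]
  · rcases hx with h | h
    · exact absurd h h0
    · have hadj : (cayley S).Adj 0 x := by
        refine ⟨fun hc => h0 hc.symm, ?_⟩
        rcases h with h | h
        · exact Or.inl (by simpa using h)
        · exact Or.inr (by simpa using h)
      exact le_of_eq (SimpleGraph.dist_eq_one_iff_adj.2 hadj)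

lemma exists_list_of_walk {g h : G} (w : (cayley S).Walk g h) :
    ∃ l : List G, (∀ x ∈ l, x ∈ S ∪ -S) ∧ l.length = w.length ∧ l.sum = h - g := by
  induction w with
  | nil => exact ⟨[], by simp, by simp, by simp⟩
  | @cons a c b hadj p ih =>
    obtain ⟨l, hmem, hlen, hsum⟩ := ih
    refine ⟨(c - a) :: l, ?_, by simp [hlen], by rw [List.sum_cons, hsum]; abel⟩
    intro x hx
    rcases List.mem_cons.1 hx with rfl | hx
    · rcases hadj.2 with h | h
      · exact Or.inl h
      · exact Or.inr (by simpa using h)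
    · exact hmem x hx

lemma exists_list_of_dist {g : G} {n : ℕ} (h : (cayley S).dist 0 g ≤ n)
    (hr : (cayley S).Reachable 0 g) :
    ∃ l : List G, (∀ x ∈ l, x ∈ stepSet S) ∧ l.length = n ∧ l.sum = g := by
  obtain ⟨w, hw⟩ := hr.exists_walk_length_eq_dist
  obtain ⟨l, hmem, hlen, hsum⟩ := exists_list_of_walk S w
  refine ⟨l ++ List.replicate (n - l.length) 0, ?_, ?_, ?_⟩
  · intro x hx
    rcases List.mem_append.1 hx with hx | hx
    · exact Set.mem_insert_of_mem _ (hmem x hx)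
    · rw [List.eq_of_mem_replicate hx]; exact zero_mem_stepSet S
  · rw [List.length_append, List.length_replicate]; omega
  · rw [List.sum_append, List.sum_replicate]; simpa using hsum

variable (hS : AddSubgroup.closure S = ⊤)
include hS

lemma dist_le_of_list (l : List G) (hl : ∀ x ∈ l, x ∈ stepSet S) :
    (cayley S).dist 0 l.sum ≤ l.length := by
  induction l with
  | nil => simp
  | cons x t ih =>
    have h1 : (cayley S).dist 0 (x + t.sum) ≤ _ + _ := dist_zero_add S hS x t.sum
    have h2 := ih (fun y hy => hl y (List.mem_cons_of_mem x hy))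
    have h3 := dist_zero_le_one S (hl x (List.mem_cons_self))
    simp only [List.sum_cons, List.length_cons]
    omega

lemma mem_ball_iff (n : ℕ) (g : G) :
    (cayley S).dist 0 g ≤ n ↔
      ∃ l : List G, (∀ x ∈ l, x ∈ stepSet S) ∧ l.length = n ∧ l.sum = g := by
  constructor
  · intro h
    exact exists_list_of_dist S h (reachable_zero S hS g)
  · rintro ⟨l, hmem, hlen, rfl⟩
    simpa [hlen] using dist_le_of_list S hS l hmem

lemma ball_finite (hfin : S.Finite) (n : ℕ) :
    {g : G | (cayley S).dist 0 g ≤ n}.Finite := by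
  have hstep : (stepSet S).Finite := (hfin.union hfin.neg).insert 0
  induction n with
  | zero =>
    refine Set.Finite.subset (Set.finite_singleton (0 : G)) ?_
    intro g hg
    obtain ⟨l, _, hlen, hsum⟩ := (mem_ball_iff S hS 0 g).1 hg
    rw [List.length_eq_zero_iff] at hlen
    simp [← hsum, hlen]
  | succ n ih =>
    refine Set.Finite.subset (Set.Finite.image2 (· + ·) hstep ih) ?_
    intro g hg
    obtain ⟨l, hmem, hlen, hsum⟩ := (mem_ball_iff S hS (n+1) g).1 hg
    rcases l with _ | ⟨x, t⟩
    · simp at hlen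
    · have hx := hmem x (List.mem_cons_self)
      have ht : t.sum ∈ {g : G | (cayley S).dist 0 g ≤ n} := by
        rw [Set.mem_setOf_eq, mem_ball_iff S hS]
        exact ⟨t, fun y hy => hmem y (List.mem_cons_of_mem x hy), by simpa using hlen, rfl⟩
      have hg2 : g = x + t.sum := by rw [← hsum, List.sum_cons]
      rw [hg2]
      exact Set.mem_image2_of_mem hx ht

end CayAux

namespace CayAux

section Quot

variable (G : Type*) [AddCommGroup G] [AddGroup.FG G]

lemma torsion_finite : Finite (AddCommGroup.torsion G) := by
  have h1 : Module.Finite ℤ G := Module.Finite.iff_addGroup_fg.mpr ‹_›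
  have h2 : IsNoetherian ℤ G := isNoetherian_of_isNoetherianRing_of_finite ℤ G
  have fg : (Submodule.torsion ℤ G).FG := IsNoetherian.noetherian _
  rw [Submodule.fg_iff_addSubgroup_fg, Submodule.torsion_int] at fg
  have : AddGroup.FG (AddCommGroup.torsion G) := (AddGroup.fg_iff_addSubgroup_fg _).2 fg
  exact AddCommGroup.finite_of_fg_torsion _ (fun x => by
    have hx : IsOfFinAddOrder (x : G) := x.2
    rw [← addOrderOf_pos_iff] at hx ⊢
    rwa [AddSubgroup.addOrderOf_coe] at hx)

local notation "Q" => G ⧸ AddCommGroup.torsion G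

lemma q_nzsmul : NoZeroSMulDivisors ℤ Q := by
  constructor
  intro a q h
  by_cases ha : a = 0
  · exact Or.inl ha
  refine Or.inr ?_
  obtain ⟨x, rfl⟩ := QuotientAddGroup.mk'_surjective (AddCommGroup.torsion G) q
  have h2 : (QuotientAddGroup.mk' (AddCommGroup.torsion G)) (a • x) = 0 := by
    rw [← ((int_smul_eq_zsmul _ a _).trans
      (map_zsmul (QuotientAddGroup.mk' (AddCommGroup.torsion G)) a x).symm :
      a • ((QuotientAddGroup.mk' (AddCommGroup.torsion G)) x)
        = (QuotientAddGroup.mk' (AddCommGroup.torsion G)) (a • x))]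
    exact h
  have htor : IsOfFinAddOrder (a • x) := (QuotientAddGroup.eq_zero_iff _).1 h2
  rw [QuotientAddGroup.mk'_apply, QuotientAddGroup.eq_zero_iff]
  rw [isOfFinAddOrder_iff_zsmul_eq_zero] at htor
  show IsOfFinAddOrder x
  rw [isOfFinAddOrder_iff_zsmul_eq_zero]
  obtain ⟨n, hn, hx⟩ := htor
  exact ⟨n * a, mul_ne_zero hn ha, by rwa [mul_zsmul]⟩

lemma q_finite : Module.Finite ℤ Q :=
  Module.Finite.iff_addGroup_fg.mpr inferInstance

lemma q_free : Module.Free ℤ Q := by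
  have := q_nzsmul G
  have := q_finite G
  exact Module.free_of_finite_type_torsion_free'

end Quot

end CayAux

namespace CayAux

section Counting

open Finset

variable {G : Type*} [AddCommGroup G] [AddGroup.FG G] (S : Set G)

local notation "Q" => G ⧸ AddCommGroup.torsion G
local notation "π" => QuotientAddGroup.mk' (AddCommGroup.torsion G)
local notation "r" => Module.finrank ℤ (G ⧸ AddCommGroup.torsion G)

lemma pi_zsmul (a : ℤ) (x : G) : a • (π x : Q) = π (a • x) :=
  (int_smul_eq_zsmul _ a _).trans (map_zsmul π a x).symm

variable (hS : AddSubgroup.closure S = ⊤) (hfin : S.Finite)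
include hS hfin

lemma card_ball_le :
    ∃ C : ℕ, ∀ n : ℕ, Nat.card {g : G | (cayley S).dist 0 g ≤ n} ≤ C * (n + 1) ^ r := by
  classical
  haveI := q_finite G
  haveI := q_free G
  haveI := torsion_finite G
  let b := Module.finBasis ℤ Q
  have hT : (stepSet S).Finite := (hfin.union hfin.neg).insert 0
  let F : Finset G := hT.toFinset
  let M : ℕ := F.sup fun x => Finset.univ.sup fun i => (b.repr (π x) i).natAbs
  have hM : ∀ x ∈ stepSet S, ∀ i, (b.repr (π x) i).natAbs ≤ M := by
    intro x hx i
    have h1 : (b.repr (π x) i).natAbs ≤ Finset.univ.sup fun i => (b.repr (π x) i).natAbs :=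
      Finset.le_sup (f := fun i => (b.repr (π x) i).natAbs) (Finset.mem_univ i)
    exact h1.trans (Finset.le_sup (f := fun x => Finset.univ.sup
      fun i => (b.repr (π x) i).natAbs) (hT.mem_toFinset.2 hx))
  have coordBound : ∀ l : List G, (∀ x ∈ l, x ∈ stepSet S) →
      ∀ i, (b.repr (π l.sum) i).natAbs ≤ l.length * M := by
    intro l
    induction l with
    | nil => intro _ i; simp
    | cons x t ih =>
      intro hmem i
      have h1 : (π ((x :: t).sum) : Q) = π x + π t.sum := by
        rw [List.sum_cons, map_add]
      rw [h1, map_add]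
      have := ih (fun y hy => hmem y (List.mem_cons_of_mem x hy)) i
      have h2 := hM x (hmem x (List.mem_cons_self)) i
      calc ((b.repr (π x) + b.repr (π t.sum)) i).natAbs
          = (b.repr (π x) i + b.repr (π t.sum) i).natAbs := by rw [Finsupp.add_apply]
        _ ≤ (b.repr (π x) i).natAbs + (b.repr (π t.sum) i).natAbs := Int.natAbs_add_le _ _
        _ ≤ M + t.length * M := by omega
        _ = (x :: t).length * M := by rw [List.length_cons]; ring
  -- the retraction
  have hsurj := QuotientAddGroup.mk'_surjective (AddCommGroup.torsion G)
  let ρ : Q → G := Function.surjInv hsurj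
  have hρ : ∀ q : Q, (π (ρ q) : Q) = q := Function.surjInv_eq hsurj
  refine ⟨Nat.card (AddCommGroup.torsion G) * (2 * M + 1) ^ r, fun n => ?_⟩
  -- injection from the ball into torsion × box
  let box := Finset.Icc (-((n * M : ℕ) : ℤ)) ((n * M : ℕ) : ℤ)
  let f : {g : G | (cayley S).dist 0 g ≤ n} →
      (AddCommGroup.torsion G) × (Fin r → box) := fun g =>
    (⟨(g : G) - ρ (π g), by
        have : (π ((g : G) - ρ (π g)) : Q) = 0 := by rw [map_sub, hρ, sub_self]
        have h2 := (QuotientAddGroup.eq_zero_iff _).1 this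
        exact h2⟩,
     fun i => ⟨b.repr (π (g : G)) i, by
        obtain ⟨l, hmem, hlen, hsum⟩ := (mem_ball_iff S hS n _).1 g.2
        have := coordBound l hmem i
        rw [hsum, hlen] at this
        rw [Finset.mem_Icc]
        omega⟩)
  have hinj : Function.Injective f := by
    intro g1 g2 h
    have hfst : (f g1).1 = (f g2).1 := congrArg Prod.fst h
    have hsnd : (f g1).2 = (f g2).2 := congrArg Prod.snd h
    have h1 : (g1 : G) - ρ (π (g1 : G)) = (g2 : G) - ρ (π (g2 : G)) :=
      congrArg Subtype.val hfst
    have h2 : ∀ i, b.repr (π (g1 : G)) i = b.repr (π (g2 : G)) i := fun i =>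
      congrArg Subtype.val (congrFun hsnd i)
    have h3 : (π (g1 : G) : Q) = π (g2 : G) := by
      apply b.repr.injective
      ext i
      exact h2 i
    have h4 : (g1 : G) = (g2 : G) := by
      have := h1
      rw [h3] at this
      have := sub_left_injective this
      exact this
    exact Subtype.ext h4
  calc Nat.card {g : G | (cayley S).dist 0 g ≤ n}
      ≤ Nat.card ((AddCommGroup.torsion G) × (Fin r → box)) :=
        Nat.card_le_card_of_injective f hinj
    _ = Nat.card (AddCommGroup.torsion G) * (2 * (n * M) + 1) ^ r := by
        rw [Nat.card_prod, Nat.card_pi]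
        congr 1
        rw [Finset.prod_const, Finset.card_univ, Fintype.card_fin]
        congr 1
        rw [Nat.card_eq_fintype_card, Fintype.card_coe, Int.card_Icc]
        omega
    _ ≤ Nat.card (AddCommGroup.torsion G) * ((2 * M + 1) * (n + 1)) ^ r := by
        apply Nat.mul_le_mul_left
        apply Nat.pow_le_pow_left
        nlinarith
    _ = Nat.card (AddCommGroup.torsion G) * (2 * M + 1) ^ r * (n + 1) ^ r := by
        rw [mul_pow, mul_assoc]

lemma card_ball_ge :
    ∃ D : ℕ, ∀ k : ℕ, (k + 1) ^ r ≤ Nat.card {g : G | (cayley S).dist 0 g ≤ D * k} := by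
  classical
  haveI := q_finite G
  haveI := q_free G
  let b := Module.finBasis ℤ Q
  have hsurj := QuotientAddGroup.mk'_surjective (AddCommGroup.torsion G)
  let ρ : Q → G := Function.surjInv hsurj
  have hρ : ∀ q : Q, (π (ρ q) : Q) = q := Function.surjInv_eq hsurj
  let gf : Fin r → G := fun i => ρ (b i)
  let L : ℕ := Finset.univ.sup fun i => (cayley S).dist 0 (gf i)
  refine ⟨r * L, fun k => ?_⟩
  let box := Finset.Icc (-(k : ℤ)) (k : ℤ)
  
  haveI : Finite {g : G | (cayley S).dist 0 g ≤ r * L * k} :=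
    (ball_finite S hS hfin _).to_subtype
  let f : (Fin r → box) → {g : G | (cayley S).dist 0 g ≤ r * L * k} := fun a =>
    ⟨∑ i, ((a i : ℤ) • gf i), by
      refine le_trans (dist_zero_sum S hS _ _) ?_
      calc ∑ i, (cayley S).dist 0 ((a i : ℤ) • gf i)
          ≤ ∑ i : Fin r, k * L := by
            refine Finset.sum_le_sum fun i _ => ?_
            refine le_trans (dist_zero_zsmul S hS _ _) ?_
            have h1 : (a i : ℤ).natAbs ≤ k := by
              have := (a i).2
              rw [Finset.mem_Icc] at this
              omega
            have h2 : (cayley S).dist 0 (gf i) ≤ L :=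
              Finset.le_sup (f := fun i => (cayley S).dist 0 (gf i)) (Finset.mem_univ i)
            exact Nat.mul_le_mul h1 h2
        _ = r * L * k := by
            simp only [Finset.sum_const, Finset.card_univ, Fintype.card_fin, smul_eq_mul]
            ring⟩
  have hinj : Function.Injective f := by
    intro a1 a2 h
    have h1 : (∑ i, ((a1 i : ℤ) • gf i)) = ∑ i, ((a2 i : ℤ) • gf i) :=
      congrArg Subtype.val h
    have hgf : ∀ i, (π (gf i) : Q) = b i := fun i => hρ (b i)
    have key : ∀ a : Fin r → box, (π (∑ i, ((a i : ℤ) • gf i)) : Q)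
        = ∑ i, (a i : ℤ) • b i := by
      intro a
      rw [map_sum]
      refine Finset.sum_congr rfl fun i _ => ?_
      rw [← pi_zsmul, hgf i]
    have h2 : (∑ i, ((a1 i : ℤ) : ℤ) • b i : Q) = ∑ i, ((a2 i : ℤ) : ℤ) • b i := by
      rw [← key a1, ← key a2, h1]
    have h3 : (fun i => ((a1 i : ℤ))) = fun i => ((a2 i : ℤ)) := by
      have e1 := b.repr_sum_self (fun i => ((a1 i : ℤ)))
      have e2 := b.repr_sum_self (fun i => ((a2 i : ℤ)))
      rw [← e1, h2, e2]
    funext i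
    exact Subtype.ext (congrFun h3 i)
  calc (k + 1) ^ r ≤ (2 * k + 1) ^ r := Nat.pow_le_pow_left (by omega) _
    _ = Nat.card (Fin r → box) := by
        rw [Nat.card_pi, Finset.prod_const, Finset.card_univ, Fintype.card_fin]
        congr 1
        rw [Nat.card_eq_fintype_card, Fintype.card_coe, Int.card_Icc]
        omega
    _ ≤ Nat.card {g : G | (cayley S).dist 0 g ≤ r * L * k} :=
        Nat.card_le_card_of_injective f hinj

end Counting

end CayAux

namespace CayAux

lemma card_ball_iso {G G' : Type*} [AddCommGroup G] [AddCommGroup G']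
    (S : Set G) (S' : Set G') (φ : cayley S ≃g cayley S') (n : ℕ) :
    Nat.card {g : G | (cayley S).dist 0 g ≤ n}
      = Nat.card {g' : G' | (cayley S').dist 0 g' ≤ n} := by
  let ψ : cayley S ≃g cayley S' := φ.trans (transIso S' (-(φ 0)))
  have h0 : (ψ 0 : G') = 0 := add_neg_cancel _
  have hdist : ∀ g : G, (cayley S').dist 0 (ψ g) = (cayley S).dist 0 g := by
    intro g
    calc (cayley S').dist 0 (ψ g) = (cayley S').dist (ψ 0) (ψ g) := by rw [h0]
      _ = (cayley S).dist 0 g := iso_dist ψ 0 g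
  exact Nat.card_congr (Equiv.subtypeEquiv ψ.toEquiv (fun g => by
    have he : (ψ.toEquiv g : G') = ψ g := rfl
    simp only [Set.mem_setOf_eq, he, hdist g]))

lemma rank_le_of_poly {r r' C : ℕ} (h : ∀ k : ℕ, (k + 1) ^ r ≤ C * (k + 1) ^ r') :
    r ≤ r' := by
  by_contra hc
  push_neg at hc
  have h1 := h C
  have h2 : (C + 1) ^ (r' + 1) ≤ (C + 1) ^ r := Nat.pow_le_pow_right (by omega) (by omega)
  have h3 : (C + 1) * (C + 1) ^ r' ≤ C * (C + 1) ^ r' := by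
    calc (C + 1) * (C + 1) ^ r' = (C + 1) ^ (r' + 1) := by rw [pow_succ]; ring
      _ ≤ (C + 1) ^ r := h2
      _ ≤ C * (C + 1) ^ r' := h1
  have hpos : 0 < (C + 1) ^ r' := Nat.pow_pos (by omega)
  have := Nat.le_of_mul_le_mul_right h3 hpos
  omega

lemma rank_le_main {G G' : Type*} [AddCommGroup G] [AddCommGroup G']
    [AddGroup.FG G] [AddGroup.FG G']
    (S : Set G) (S' : Set G') (hfin : S.Finite) (hS : AddSubgroup.closure S = ⊤)
    (hfin' : S'.Finite) (hS' : AddSubgroup.closure S' = ⊤) (φ : cayley S ≃g cayley S') :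
    Module.finrank ℤ (G ⧸ AddCommGroup.torsion G) ≤
      Module.finrank ℤ (G' ⧸ AddCommGroup.torsion G') := by
  obtain ⟨C, hC⟩ := card_ball_le S' hS' hfin'
  obtain ⟨D, hD⟩ := card_ball_ge S hS hfin
  set r := Module.finrank ℤ (G ⧸ AddCommGroup.torsion G)
  set r' := Module.finrank ℤ (G' ⧸ AddCommGroup.torsion G')
  refine rank_le_of_poly (C := C * (D + 1) ^ r') (fun k => ?_)
  calc (k + 1) ^ r ≤ Nat.card {g : G | (cayley S).dist 0 g ≤ D * k} := hD k
    _ = Nat.card {g' : G' | (cayley S').dist 0 g' ≤ D * k} := card_ball_iso S S' φ (D * k)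
    _ ≤ C * (D * k + 1) ^ r' := hC (D * k)
    _ ≤ C * ((D + 1) * (k + 1)) ^ r' := by
        apply Nat.mul_le_mul_left
        apply Nat.pow_le_pow_left
        nlinarith
    _ = C * (D + 1) ^ r' * (k + 1) ^ r' := by rw [mul_pow, mul_assoc]

end CayAux


/-- Finitely generated Abelian groups that admit isomorphic Cayley graphs have the same
rank, i.e. their quotients by torsion have the same rank as free Abelian groups. -/
theorem rank_eq_of_iso_cayley {G G' : Type*} [AddCommGroup G] [AddCommGroup G']
    [AddGroup.FG G] [AddGroup.FG G']
    (h : ∃ (S : Set G) (S' : Set G'),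
        S.Finite ∧ AddSubgroup.closure S = ⊤ ∧
        S'.Finite ∧ AddSubgroup.closure S' = ⊤ ∧
        Nonempty (cayley S ≃g cayley S')) :
    Module.finrank ℤ (G ⧸ AddCommGroup.torsion G) =
      Module.finrank ℤ (G' ⧸ AddCommGroup.torsion G') := by
  obtain ⟨S, S', hfin, hS, hfin', hS', ⟨φ⟩⟩ := h
  exact le_antisymm (CayAux.rank_le_main S S' hfin hS hfin' hS' φ)
    (CayAux.rank_le_main S' S hfin' hS' hfin hS φ.symm)
end

section
/- For every n ∈ ℤ, the flip at position n, i.e., the map ℤ × ℤ/2 → ℤ × ℤ/2 sending (x,y) to (x,y) if x ≠ n and to (x, 1−y) if x = n, is a graph automorphism of Cay(ℤ × ℤ/2, {±(1,0), ±(1,1)}), and it is not induced by an affine isomorphism of ℤ × ℤ/2. -/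
/-- The flip at position `n` in `ℤ × ℤ/2`. -/
def flipAt (n : ℤ) : ℤ × ZMod 2 → ℤ × ZMod 2 :=
  fun p => if p.1 = n then (p.1, 1 - p.2) else p

lemma flipAt_involutive (n : ℤ) : Function.Involutive (flipAt n) := by
  intro p
  obtain ⟨x, y⟩ := p
  unfold flipAt
  by_cases h : x = n
  · simp [h, sub_sub_cancel]
  · simp [h]

lemma flipAt_fst (n : ℤ) (p : ℤ × ZMod 2) : (flipAt n p).1 = p.1 := by
  unfold flipAt; split <;> rfl

lemma memS_iff (v : ℤ × ZMod 2) :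
    v ∈ ({(1, 0), -(1, 0), (1, 1), -(1, 1)} : Set (ℤ × ZMod 2)) ↔ v.1 = 1 ∨ v.1 = -1 := by
  obtain ⟨x, y⟩ := v
  have hy : ∀ z : ZMod 2, z = 0 ∨ z = 1 := by decide
  have hneg : (-1 : ZMod 2) = 1 := by decide
  have hn1 : -((1 : ℤ), (0 : ZMod 2)) = ((-1 : ℤ), (0 : ZMod 2)) := by
    simp [Prod.ext_iff]
  have hn2 : -((1 : ℤ), (1 : ZMod 2)) = ((-1 : ℤ), (1 : ZMod 2)) := by
    simp [Prod.ext_iff, hneg]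
  simp only [Set.mem_insert_iff, Set.mem_singleton_iff, hn1, hn2, Prod.ext_iff]
  constructor
  · rintro (⟨h, _⟩ | ⟨h, _⟩ | ⟨h, _⟩ | ⟨h, _⟩) <;> simp [h]
  · rintro (h | h) <;> rcases hy y with hy' | hy' <;> simp [h, hy', hneg]

lemma adj_iff (a b : ℤ × ZMod 2) :
    (cayley ({(1, 0), -(1, 0), (1, 1), -(1, 1)} : Set (ℤ × ZMod 2))).Adj a b ↔
      (b.1 - a.1 = 1 ∨ a.1 - b.1 = 1) := by
  show (a ≠ b ∧ _) ↔ _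
  rw [memS_iff, memS_iff]
  constructor
  · rintro ⟨-, (h | h) | (h | h)⟩ <;> simp only [Prod.fst_sub] at h <;> omega
  · rintro (h | h)
    · refine ⟨fun he => by simp [he] at h, Or.inl (Or.inl ?_)⟩
      simpa using h
    · refine ⟨fun he => by simp [he] at h, Or.inr (Or.inl ?_)⟩
      simpa using h

/-- For every `n ∈ ℤ`, the flip at position `n` is a graph automorphism of
`Cay(ℤ × ℤ/2, {±(1,0), ±(1,1)})`, but it is not induced by an affine isomorphism of
`ℤ × ℤ/2` (a group automorphism composed with a translation). -/
theorem flip_automorphism_not_affine (n : ℤ) :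
    (Function.Bijective (flipAt n) ∧
      ∀ p q : ℤ × ZMod 2,
        (cayley ({(1, 0), -(1, 0), (1, 1), -(1, 1)} : Set (ℤ × ZMod 2))).Adj
            (flipAt n p) (flipAt n q) ↔
          (cayley ({(1, 0), -(1, 0), (1, 1), -(1, 1)} : Set (ℤ × ZMod 2))).Adj p q) ∧
      ¬∃ (ψ : (ℤ × ZMod 2) ≃+ (ℤ × ZMod 2)) (b : ℤ × ZMod 2),
          ∀ p, flipAt n p = ψ p + b := by
  refine ⟨⟨(flipAt_involutive n).bijective, fun p q => ?_⟩, ?_⟩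
  · rw [adj_iff, adj_iff, flipAt_fst, flipAt_fst]
  · rintro ⟨ψ, b, h⟩
    have h0 := h (n, 0)
    have h1 := h (n + 1, 0)
    have h2 := h (n + 2, 0)
    have e0 : flipAt n (n, 0) = (n, 1) := by simp [flipAt]
    have e1 : flipAt n (n + 1, 0) = (n + 1, 0) := by simp [flipAt]
    have e2 : flipAt n (n + 2, 0) = (n + 2, 0) := by simp [flipAt]
    rw [e0] at h0; rw [e1] at h1; rw [e2] at h2
    have key : ψ ((n + 2, 0) + (n, 0)) = ψ ((n + 1, 0) + ((n + 1 : ℤ), (0 : ZMod 2))) := by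
      congr 1
      simp [Prod.ext_iff]; ring
    rw [map_add, map_add] at key
    have hψ0 : ψ (n, 0) = (n, 1) - b := by rw [eq_sub_iff_add_eq, ← h0]
    have hψ1 : ψ ((n + 1 : ℤ), (0 : ZMod 2)) = (n + 1, 0) - b := by
      rw [eq_sub_iff_add_eq, ← h1]
    have hψ2 : ψ ((n + 2 : ℤ), (0 : ZMod 2)) = (n + 2, 0) - b := by
      rw [eq_sub_iff_add_eq, ← h2]
    rw [hψ0, hψ1, hψ2] at key
    have hsnd := congrArg Prod.snd key
    simp only [Prod.snd_add, Prod.snd_sub] at hsnd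
    exact one_ne_zero (sub_left_inj.mp (add_left_cancel hsnd))
end

section
/- In the Cayley graph Cay(ℤ², {±(1,0), ±(0,1)}), the line γ : ℤ → ℤ² given by γ(n) = (n, 0) for n ≤ 0 and γ(n) = (n−1, 1) for n ≥ 1 is a quasi-convex geodesic line that is neither a convex geodesic line nor quasi-algebraic. -/
namespace QCAux
open SimpleGraph

abbrev S : Set (ℤ × ℤ) := {(1, 0), (-1, 0), (0, 1), (0, -1)}
abbrev Γ : SimpleGraph (ℤ × ℤ) := cayley S

lemma adj_iff (g h : ℤ × ℤ) :
    Γ.Adj g h ↔ (h.1 - g.1).natAbs + (h.2 - g.2).natAbs = 1 := by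
  constructor
  · rintro ⟨hne, hm | hm⟩ <;>
    · simp only [S, Set.mem_insert_iff, Set.mem_singleton_iff, Prod.ext_iff,
        Prod.fst_sub, Prod.snd_sub] at hm
      omega
  · intro h1
    refine ⟨fun he => by simp [he] at h1, Or.inl ?_⟩
    simp only [S, Set.mem_insert_iff, Set.mem_singleton_iff, Prod.ext_iff,
      Prod.fst_sub, Prod.snd_sub]
    omega

lemma le_length_walk : ∀ {x y : ℤ × ℤ} (w : Γ.Walk x y),
    (y.1 - x.1).natAbs + (y.2 - x.2).natAbs ≤ w.length
  | _, _, SimpleGraph.Walk.nil => by simp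
  | _, _, SimpleGraph.Walk.cons h w => by
      have h1 := (adj_iff _ _).mp h
      have h2 := le_length_walk w
      simp only [SimpleGraph.Walk.length_cons]
      omega

lemma exists_walk : ∀ (N : ℕ) (x y : ℤ × ℤ),
    (y.1 - x.1).natAbs + (y.2 - x.2).natAbs = N → ∃ w : Γ.Walk x y, w.length = N := by
  intro N
  induction N with
  | zero =>
      intro x y h
      have : x = y := Prod.ext (by omega) (by omega)
      subst this
      exact ⟨.nil, rfl⟩
  | succ N ih =>
      intro x y h
      set x' : ℤ × ℤ := if x.1 < y.1 then (x.1 + 1, x.2) else if y.1 < x.1 then (x.1 - 1, x.2)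
        else if x.2 < y.2 then (x.1, x.2 + 1) else (x.1, x.2 - 1) with hx'
      have hadj : Γ.Adj x x' := by
        rw [adj_iff, hx']; split_ifs <;> simp
      have hL : (y.1 - x'.1).natAbs + (y.2 - x'.2).natAbs = N := by
        rw [hx']; split_ifs <;> simp <;> omega
      obtain ⟨w, hw⟩ := ih x' y hL
      exact ⟨.cons hadj w, by simp [hw]⟩

lemma dist_eq (x y : ℤ × ℤ) :
    Γ.dist x y = (y.1 - x.1).natAbs + (y.2 - x.2).natAbs := by
  obtain ⟨w, hw⟩ := exists_walk _ x y rfl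
  refine le_antisymm (hw ▸ SimpleGraph.dist_le w) ?_
  obtain ⟨p, hp⟩ := SimpleGraph.Reachable.exists_walk_length_eq_dist ⟨w⟩
  exact hp ▸ le_length_walk p

def γ : ℤ → ℤ × ℤ := fun n => if n ≤ 0 then (n, 0) else (n - 1, 1)

lemma gamma_fst (n : ℤ) : (γ n).1 = if n ≤ 0 then n else n - 1 := by
  unfold γ; split_ifs <;> rfl

lemma gamma_snd (n : ℤ) : (γ n).2 = if n ≤ 0 then 0 else 1 := by
  unfold γ; split_ifs <;> rfl

lemma geo : IsGeodesicLine Γ γ := by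
  intro j k
  rw [dist_eq, gamma_fst, gamma_fst, gamma_snd, gamma_snd]
  split_ifs <;> simp <;> omega

lemma chain_le (k : ℕ) (p : ℕ → ℤ × ℤ) (h : ∀ i < k, Γ.Adj (p i) (p (i + 1))) :
    ∀ j ≤ k, ((p j).1 - (p 0).1).natAbs + ((p j).2 - (p 0).2).natAbs ≤ j := by
  intro j
  induction j with
  | zero => simp
  | succ j ih =>
      intro hj
      have h1 := (adj_iff _ _).mp (h j (by omega))
      have h2 := ih (by omega)
      omega


lemma absle {a b : ℤ} {c : ℕ} (h : a.natAbs + b.natAbs ≤ c) :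
    -(c : ℤ) ≤ a ∧ a ≤ c ∧ -(c : ℤ) ≤ b ∧ b ≤ c := by omega

lemma eqsplit {x1 x2 y1 y2 a1 a2 : ℤ} {j D : ℕ} (hj : j ≤ D)
    (hA : (a1 - x1).natAbs + (a2 - x2).natAbs ≤ j)
    (hB : (y1 - a1).natAbs + (y2 - a2).natAbs ≤ D - j)
    (hD : D = (y1 - x1).natAbs + (y2 - x2).natAbs) :
    (a2 - x2).natAbs + (y2 - a2).natAbs = (y2 - x2).natAbs := by omega

lemma between {x a y : ℤ} (h : (a - x).natAbs + (y - a).natAbs = (y - x).natAbs) :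
    (x ≤ a ∧ a ≤ y) ∨ (y ≤ a ∧ a ≤ x) := by omega

lemma Dbound {x1 x2 y1 y2 gn1 gn2 gm1 gm2 : ℤ} {c D : ℕ} {n m : ℤ}
    (hx : (gn1 - x1).natAbs + (gn2 - x2).natAbs ≤ c)
    (hy : (gm1 - y1).natAbs + (gm2 - y2).natAbs ≤ c)
    (hD : D = (y1 - x1).natAbs + (y2 - x2).natAbs)
    (hgn : n - 1 ≤ gn1 ∧ gn1 ≤ n ∧ 0 ≤ gn2 ∧ gn2 ≤ 1)
    (hgm : m - 1 ≤ gm1 ∧ gm1 ≤ m ∧ 0 ≤ gm2 ∧ gm2 ≤ 1)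
    (hnm : n ≤ m) :
    (D : ℤ) ≤ (m - n) + 2 * c + 2 := by omega

lemma key {c j D : ℕ} {n m x1 x2 y1 y2 a1 a2 gn1 gn2 gm1 gm2 gj1 gj2 : ℤ}
    (hgn : n - 1 ≤ gn1 ∧ gn1 ≤ n ∧ 0 ≤ gn2 ∧ gn2 ≤ 1)
    (hgm : m - 1 ≤ gm1 ∧ gm1 ≤ m ∧ 0 ≤ gm2 ∧ gm2 ≤ 1)
    (hgj : n + (j : ℤ) - 1 ≤ gj1 ∧ gj1 ≤ n + (j : ℤ) ∧ 0 ≤ gj2 ∧ gj2 ≤ 1)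
    (hnm : n ≤ m) (hj : j ≤ D)
    (hx : (gn1 - x1).natAbs + (gn2 - x2).natAbs ≤ c)
    (hy : (gm1 - y1).natAbs + (gm2 - y2).natAbs ≤ c)
    (hA : (a1 - x1).natAbs + (a2 - x2).natAbs ≤ j)
    (hB : (y1 - a1).natAbs + (y2 - a2).natAbs ≤ D - j)
    (hD : D = (y1 - x1).natAbs + (y2 - x2).natAbs) :
    (gj1 - a1).natAbs + (gj2 - a2).natAbs ≤ 6 * c + 8 := by
  obtain ⟨hx1, hx2, hx3, hx4⟩ := absle hx
  obtain ⟨hy1, hy2, hy3, hy4⟩ := absle hy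
  have hb2 := between (eqsplit hj hA hB hD)
  obtain ⟨hA1, hA2, hA3, hA4⟩ := absle hA
  obtain ⟨hB1, hB2, hB3, hB4⟩ := absle hB
  have hDle := Dbound hx hy hD hgn hgm hnm
  have hDj : ((D - j : ℕ) : ℤ) = (D : ℤ) - (j : ℤ) := by omega
  rw [hDj] at hB1 hB2 hB3 hB4
  clear hx hy hA hB hD hDj
  omega

lemma gbounds (k : ℤ) :
    k - 1 ≤ (if k ≤ 0 then k else k - 1) ∧ (if k ≤ 0 then k else k - 1) ≤ k ∧
      0 ≤ (if k ≤ 0 then (0 : ℤ) else 1) ∧ (if k ≤ 0 then (0 : ℤ) else 1) ≤ 1 := by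
  split_ifs <;> omega

lemma quasi : IsQuasiConvexGeodesicLine Γ γ := by
  refine ⟨geo, fun c => ⟨6 * c + 8, ?_⟩⟩
  intro n m hnm x y hx hy p hseg hp0 hpD j hj
  obtain ⟨hadj, -⟩ := hseg
  rw [dist_eq, gamma_fst, gamma_snd] at hx hy
  have hA := chain_le _ p hadj j hj
  rw [hp0] at hA
  have hB : (y.1 - (p j).1).natAbs + (y.2 - (p j).2).natAbs ≤ Γ.dist x y - j := by
    have hc : ∀ i < Γ.dist x y - j, Γ.Adj (p (j + i)) (p (j + (i + 1))) := by
      intro i hi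
      have := hadj (j + i) (by omega)
      rwa [Nat.add_assoc] at this
    have h2 := chain_le (Γ.dist x y - j) (fun i => p (j + i)) hc (Γ.dist x y - j) le_rfl
    have hjj : j + (Γ.dist x y - j) = Γ.dist x y := by omega
    simp only [hjj, Nat.add_zero, hpD] at h2
    exact h2
  have hDeq := dist_eq x y
  rw [dist_eq, gamma_fst, gamma_snd]
  exact key (gbounds n) (gbounds m) (gbounds (n + (j : ℤ))) hnm hj hx hy hA hB hDeq

lemma not_convex : ¬ IsConvexGeodesicLine Γ γ := by
  rintro ⟨-, hconv⟩
  have hseg : IsGeodesicSegment Γ 2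
      (fun j => if j = 0 then ((0, 0) : ℤ × ℤ) else if j = 1 then (1, 0) else (1, 1)) := by
    constructor
    · intro i hi
      interval_cases i <;> simp [adj_iff]
    · simpa using dist_eq ((0, 0) : ℤ × ℤ) (1, 1)
  have h := hconv 0 2 (by norm_num) 2 _ hseg (by norm_num [γ]) (by norm_num [γ]) 1 (by norm_num)
  simp only [γ] at h
  norm_num [Prod.ext_iff] at h

end QCAux

/-- In the integer square lattice `Cay(ℤ², {±(1,0), ±(0,1)})`, the line
`…, (-1,0), (0,0), (0,1), (1,1), …` is a quasi-convex geodesic line that is neither a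
convex geodesic line nor quasi-algebraic (in the torsion-free group `ℤ²`,
quasi-algebraic means that all steps are equal). -/
theorem quasiConvex_not_convex_not_quasiAlgebraic :
    IsQuasiConvexGeodesicLine
        (cayley ({(1, 0), (-1, 0), (0, 1), (0, -1)} : Set (ℤ × ℤ)))
        (fun n : ℤ => if n ≤ 0 then ((n, 0) : ℤ × ℤ) else (n - 1, 1)) ∧
      ¬ IsConvexGeodesicLine
        (cayley ({(1, 0), (-1, 0), (0, 1), (0, -1)} : Set (ℤ × ℤ)))
        (fun n : ℤ => if n ≤ 0 then ((n, 0) : ℤ × ℤ) else (n - 1, 1)) ∧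
      ¬ ∀ n m : ℤ,
          ((fun n : ℤ => if n ≤ 0 then ((n, 0) : ℤ × ℤ) else (n - 1, 1)) (n + 1) -
              (fun n : ℤ => if n ≤ 0 then ((n, 0) : ℤ × ℤ) else (n - 1, 1)) n) =
            ((fun n : ℤ => if n ≤ 0 then ((n, 0) : ℤ × ℤ) else (n - 1, 1)) (m + 1) -
              (fun n : ℤ => if n ≤ 0 then ((n, 0) : ℤ × ℤ) else (n - 1, 1)) m) := by

  refine ⟨QCAux.quasi, QCAux.not_convex, ?_⟩
  intro h
  have := h 0 (-2)
  norm_num [Prod.ext_iff] at this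
end
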